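/- arXiv:2109.00944 — 2 statements merged into one kernel-verified Lean document; each statement's English description precedes it below -/
import Mathlib

section
/- Let Φ be an irreducible crystallographic root system, S ⊆ Π, and β ∈ Φ⁺ with supp(β) ∩ S ≠ ∅. Then both {min Φ_{S,β}} ∪ (Π \ S) and {−max Φ_{S,β}} ∪ (Π \ S) are simple systems of the root subsystem Φ_{S,ℤβ}; in particular min Φ_{S,β} and max Φ_{S,β} have the same length. -/
open scoped RealInnerProductSpace
attribute [local instance] Classical.propDecidable

variable {E : Type*} [NormedAddCommGroup E] [InnerProductSpace ℝ E] [FiniteDimensional ℝ E]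

/-- A finite reduced crystallographic root system spanning `E`. -/
structure IsRootSystem (Φ : Finset E) : Prop where
  nonzero : ∀ γ ∈ Φ, γ ≠ (0 : E)
  span_top : Submodule.span ℝ (Φ : Set E) = ⊤
  reduced : ∀ γ ∈ Φ, ∀ t : ℝ, t • γ ∈ Φ → t = 1 ∨ t = -1
  reflect : ∀ γ ∈ Φ, ∀ δ ∈ Φ, δ - (2 * ⟪δ, γ⟫ / ⟪γ, γ⟫) • γ ∈ Φ
  cry : ∀ γ ∈ Φ, ∀ δ ∈ Φ, ∃ n : ℤ, 2 * ⟪δ, γ⟫ / ⟪γ, γ⟫ = (n : ℝ)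

/-- `Δ` is a simple system (base) for `Φ`, and `c γ a` is the coordinate of `γ`
on the simple root `a`. -/
structure IsBase (Φ Δ : Finset E) (c : E → E → ℝ) : Prop where
  subset : Δ ⊆ Φ
  indep : LinearIndependent ℝ (fun x : (Δ : Set E) => (x : E))
  repr : ∀ γ ∈ Φ, γ = ∑ a ∈ Δ, c γ a • a
  int : ∀ γ ∈ Φ, ∀ a ∈ Δ, ∃ n : ℤ, c γ a = (n : ℝ)
  sign : ∀ γ ∈ Φ, (∀ a ∈ Δ, 0 ≤ c γ a) ∨ (∀ a ∈ Δ, c γ a ≤ 0)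

/-- Irreducibility: no splitting into two nonempty mutually orthogonal parts. -/
def IsIrredSys (Φ : Finset E) : Prop :=
  ∀ s : Set E, s ⊆ (Φ : Set E) → (∀ x ∈ s, ∀ y ∈ (Φ : Set E) \ s, ⟪x, y⟫ = 0) →
    s = ∅ ∨ s = (Φ : Set E)

/-- `Φ_{S,β}`: roots whose coordinates on every simple root of `S` agree with those of `β`. -/
def lev (Φ : Finset E) (c : E → E → ℝ) (S : Finset E) (β : E) : Set E :=
  {γ | γ ∈ Φ ∧ ∀ a ∈ S, c γ a = c β a}

/-- `Φ_{S,ℤβ}`: roots whose coordinates on `S` are a common integer multiple of those of `β`. -/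
def levZ (Φ : Finset E) (c : E → E → ℝ) (S : Finset E) (β : E) : Set E :=
  {γ | γ ∈ Φ ∧ ∃ k : ℤ, ∀ a ∈ S, c γ a = (k : ℝ) * c β a}

/-- The root-poset order: `x ≤ y` iff `y - x` is a nonnegative linear combination of
positive roots. -/
def rootLe (Φ Δ : Finset E) (c : E → E → ℝ) (x y : E) : Prop :=
  ∃ f : E → ℝ, (∀ γ, 0 ≤ f γ) ∧
    y - x = ∑ γ ∈ Φ.filter (fun γ => ∀ a ∈ Δ, 0 ≤ c γ a), f γ • γ

/-- `B` is a simple system of the (sub)system `Ψ`: a linearly independent subset such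
that every element of `Ψ` is an integral linear combination of `B` with coefficients
all nonnegative or all nonpositive. -/
def IsSimpleSystem (Ψ : Set E) (B : Finset E) : Prop :=
  (B : Set E) ⊆ Ψ ∧ LinearIndependent ℝ (fun x : (B : Set E) => (x : E)) ∧
    ∀ γ ∈ Ψ, ∃ f : E → ℤ, γ = ∑ b ∈ B, (f b : ℝ) • b ∧
      ((∀ b ∈ B, 0 ≤ f b) ∨ (∀ b ∈ B, f b ≤ 0))

set_option linter.unusedSectionVars false
set_option maxHeartbeats 1000000


/-- Bundled coordinate functions for the base `Δ`. -/
structure CoordData (Φ Δ : Finset E) (c : E → E → ℝ) : Prop where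
  out : ∃ d : E → E → ℝ,
    (∀ a, IsLinearMap ℝ (fun x => d x a)) ∧
    (∀ γ ∈ Φ, ∀ a ∈ Δ, d γ a = c γ a) ∧
    (∀ a ∈ Δ, ∀ a' ∈ Δ, d a a' = (if a = a' then (1:ℝ) else 0)) ∧
    (∀ x : E, x = ∑ a ∈ Δ, d x a • a)

lemma exists_coordData (Φ Δ : Finset E) (c : E → E → ℝ)
    (hΦ : IsRootSystem Φ) (hB : IsBase Φ Δ c) : CoordData Φ Δ c := by
  classical
  have hspan : ⊤ ≤ Submodule.span ℝ (Set.range (fun x : (Δ : Set E) => (x : E))) := by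
    rw [Subtype.range_coe]
    rw [← hΦ.span_top]
    refine Submodule.span_le.2 ?_
    intro γ hγ
    rw [hB.repr γ hγ]
    exact Submodule.sum_mem _ (fun a ha => Submodule.smul_mem _ _
      (Submodule.subset_span (by exact_mod_cast ha)))
  let b : Module.Basis (Δ : Set E) ℝ E := Module.Basis.mk hB.indep hspan
  let d : E → E → ℝ := fun x a =>
    if h : a ∈ Δ then ((Finsupp.lapply (⟨a, h⟩ : (Δ : Set E))).comp
      (b.repr : E →ₗ[ℝ] ((Δ : Set E) →₀ ℝ))) x else 0
  have hlin : ∀ a, IsLinearMap ℝ (fun x => d x a) := by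
    intro a
    by_cases h : a ∈ Δ
    · simp only [d, dif_pos h]; exact (((Finsupp.lapply (⟨a, h⟩ : (Δ : Set E))).comp
        (b.repr : E →ₗ[ℝ] ((Δ : Set E) →₀ ℝ))).isLinear)
    · simp only [d, dif_neg h]
      exact ⟨by simp, by simp⟩
  have hd_repr : ∀ x : E, ∀ a, (h : a ∈ Δ) → d x a = b.repr x ⟨a, h⟩ := by
    intro x a h; simp [d, dif_pos h]
  have hd_basis : ∀ a ∈ Δ, ∀ a' ∈ Δ, d a a' = (if a = a' then (1:ℝ) else 0) := by
    intro a ha a' ha'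
    have hba : (b ⟨a, ha⟩ : E) = a := by simp [b]
    have h1 : b.repr a = Finsupp.single ⟨a, ha⟩ 1 := by
      conv_lhs => rw [← hba]
      exact b.repr_self _
    rw [hd_repr a a' ha', h1, Finsupp.single_apply]
    by_cases h : a = a'
    · subst h; simp
    · rw [if_neg (by simpa [Subtype.ext_iff] using h), if_neg h]
  have hbridge : ∀ γ ∈ Φ, ∀ a ∈ Δ, d γ a = c γ a := by
    intro γ hγ a ha
    rw [hd_repr γ a ha]
    conv_lhs => rw [hB.repr γ hγ]
    rw [map_sum]
    rw [Finsupp.finset_sum_apply]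
    have : ∀ a' ∈ Δ, (b.repr (c γ a' • a')) ⟨a, ha⟩ = if a' = a then c γ a' else 0 := by
      intro a' ha'
      rw [map_smul, Finsupp.smul_apply]
      have : (b.repr a') ⟨a, ha⟩ = d a' a := (hd_repr a' a ha).symm
      rw [this, hd_basis a' ha' a ha]
      by_cases h : a' = a <;> simp [h]
    rw [Finset.sum_congr rfl this, Finset.sum_ite_eq' Δ a (fun a' => c γ a'), if_pos ha]
  have hexp : ∀ x : E, x = ∑ a ∈ Δ, d x a • a := by
    intro x
    have : b.repr (∑ a ∈ Δ, d x a • a) = b.repr x := by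
      ext i
      rw [map_sum, Finsupp.finset_sum_apply]
      have hiΔ : (i : E) ∈ Δ := by exact_mod_cast i.2
      have : ∀ a' ∈ Δ, (b.repr (d x a' • a')) i = if a' = (i : E) then d x a' else 0 := by
        intro a' ha'
        rw [map_smul, Finsupp.smul_apply]
        have h2 : (b.repr a') ⟨(i : E), hiΔ⟩ = d a' (i : E) := (hd_repr a' _ hiΔ).symm
        have hi : i = (⟨(i : E), hiΔ⟩ : (Δ : Set E)) := by ext; rfl
        rw [hi, h2, hd_basis a' ha' (i : E) hiΔ]
        by_cases h : a' = (i : E) <;> simp [h]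
      rw [Finset.sum_congr rfl this, Finset.sum_ite_eq' Δ (i : E) (fun a' => d x a'), if_pos hiΔ]
      exact hd_repr x (i : E) hiΔ
    exact ((b.repr.injective this)).symm
  exact ⟨⟨d, hlin, hbridge, hd_basis, hexp⟩⟩

lemma ips_pos {x : E} (hx : x ≠ 0) : 0 < ⟪x, x⟫ :=
  lt_of_not_ge (fun h => hx (real_inner_self_nonpos.1 h))

lemma rs_neg_mem {Φ : Finset E} (hΦ : IsRootSystem Φ) {γ : E} (hγ : γ ∈ Φ) : -γ ∈ Φ := by
  have h := hΦ.reflect γ hγ γ hγ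
  have hne : ⟪γ, γ⟫ ≠ 0 := ne_of_gt (ips_pos (hΦ.nonzero γ hγ))
  have h2 : 2 * ⟪γ, γ⟫ / ⟪γ, γ⟫ = (2:ℝ) := by field_simp
  rw [h2] at h
  have : γ - (2:ℝ) • γ = -γ := by module
  rwa [this] at h

/-- If two distinct roots have positive inner product, their difference is a root. -/
lemma rs_sub_mem {Φ : Finset E} (hΦ : IsRootSystem Φ) {x y : E} (hx : x ∈ Φ) (hy : y ∈ Φ)
    (hpos : 0 < ⟪x, y⟫) (hne : x ≠ y) : x - y ∈ Φ := by
  obtain ⟨p, hp⟩ := hΦ.cry y hy x hx   -- 2⟪x,y⟫/⟪y,y⟫ = p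
  obtain ⟨q, hq⟩ := hΦ.cry x hx y hy   -- 2⟪y,x⟫/⟪x,x⟫ = q
  have hxx : 0 < ⟪x, x⟫ := ips_pos (hΦ.nonzero x hx)
  have hyy : 0 < ⟪y, y⟫ := ips_pos (hΦ.nonzero y hy)
  have hyx : 0 < ⟪y, x⟫ := by rwa [real_inner_comm]
  have hp1 : 1 ≤ p := by
    have : (0:ℝ) < p := by rw [← hp]; positivity
    exact_mod_cast this
  have hq1 : 1 ≤ q := by
    have : (0:ℝ) < q := by rw [← hq]; positivity
    exact_mod_cast this
  by_cases hpone : p = 1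
  · have h := hΦ.reflect y hy x hx
    rw [hp, hpone] at h
    simpa using h
  by_cases hqone : q = 1
  · have h := hΦ.reflect x hx y hy
    rw [hq, hqone] at h
    have h2 := rs_neg_mem hΦ h
    have : -(y - ((1:ℤ):ℝ) • x) = x - y := by push_cast; module
    rwa [this] at h2
  · exfalso
    have hp2 : 2 ≤ p := by omega
    have hq2 : 2 ≤ q := by omega
    have hcs : ⟪x, y⟫ * ⟪x, y⟫ ≤ ⟪x, x⟫ * ⟪y, y⟫ := real_inner_mul_inner_self_le x y
    have hprod : (p : ℝ) * q = 4 * (⟪x,y⟫ * ⟪x,y⟫) / (⟪y,y⟫ * ⟪x,x⟫) := by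
      rw [← hp, ← hq, real_inner_comm y x]
      field_simp
      ring
    have hle4 : (p:ℝ) * q ≤ 4 := by
      rw [hprod]
      rw [div_le_iff₀ (by positivity)]
      nlinarith
    have hge4 : (4:ℝ) ≤ (p:ℝ) * q := by exact_mod_cast Int.mul_le_mul hp2 hq2 (by omega) (by omega)
    have heq : (p:ℝ) * q = 4 := le_antisymm hle4 hge4
    -- equality in Cauchy-Schwarz
    have heqcs : ⟪x, y⟫ * ⟪x, y⟫ = ⟪x, x⟫ * ⟪y, y⟫ := by
      have := hprod
      rw [heq] at this
      field_simp at this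
      nlinarith [this]
    have hexp : ⟪⟪x,x⟫ • y - ⟪x,y⟫ • x, ⟪x,x⟫ • y - ⟪x,y⟫ • x⟫
        = ⟪x,x⟫ * (⟪x,x⟫ * ⟪y,y⟫ - ⟪x,y⟫ * ⟪x,y⟫) := by
      simp only [inner_sub_left, inner_sub_right, real_inner_smul_left, real_inner_smul_right,
        real_inner_comm y x]
      ring
    have hkey : ⟪⟪x,x⟫ • y - ⟪x,y⟫ • x, ⟪x,x⟫ • y - ⟪x,y⟫ • x⟫ ≤ 0 := by
      rw [hexp, heqcs]; ring_nf; exact le_refl _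
    have hzero : ⟪x,x⟫ • y - ⟪x,y⟫ • x = 0 := real_inner_self_nonpos.1 hkey
    have h5 : (⟪x,x⟫)⁻¹ • (⟪x,x⟫ • y) = (⟪x,x⟫)⁻¹ • (⟪x,y⟫ • x) := by
      rw [sub_eq_zero.1 hzero]
    rw [smul_smul, smul_smul, inv_mul_cancel₀ (ne_of_gt hxx), one_smul] at h5
    have hymul : y = (⟪x,y⟫ / ⟪x,x⟫) • x := by rw [div_eq_inv_mul]; exact h5
    have ht : (⟪x,y⟫ / ⟪x,x⟫) = 1 ∨ (⟪x,y⟫ / ⟪x,x⟫) = -1 := by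
      apply hΦ.reduced x hx
      rw [← hymul]; exact hy
    have htpos : 0 < ⟪x,y⟫ / ⟪x,x⟫ := by positivity
    rcases ht with ht | ht
    · rw [ht, one_smul] at hymul; exact hne hymul.symm
    · rw [ht] at htpos; norm_num at htpos

section Main

variable {Φ Δ : Finset E} {c d : E → E → ℝ}

lemma refl_norm {u : E} (hu : u ≠ 0) (γ : E) : ‖γ - (2*⟪γ,u⟫/⟪u,u⟫) • u‖ = ‖γ‖ := by
  have huu : (0:ℝ) < ⟪u,u⟫ := ips_pos hu
  have h1 : ‖γ - (2*⟪γ,u⟫/⟪u,u⟫) • u‖^2 = ‖γ‖^2 := by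
    rw [norm_sub_sq_real, real_inner_smul_right, norm_smul]
    rw [mul_pow, Real.norm_eq_abs, sq_abs]
    have h2 : ‖u‖^2 = ⟪u,u⟫ := (real_inner_self_eq_norm_sq u).symm
    rw [h2]
    field_simp
    ring
  have := congrArg Real.sqrt h1
  rwa [Real.sqrt_sq (norm_nonneg _), Real.sqrt_sq (norm_nonneg _)] at this

lemma refl_step
    (hΦ : IsRootSystem Φ) (hB : IsBase Φ Δ c)
    (hdlin : ∀ a, IsLinearMap ℝ (fun x => d x a))
    (hdd : ∀ a ∈ Δ, ∀ a' ∈ Δ, d a a' = (if a = a' then (1:ℝ) else 0))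
    {γ u : E} (hγ : γ ∈ Φ) (hu : u ∈ Δ) :
    ∃ n : ℤ, (n:ℝ) = 2*⟪γ,u⟫/⟪u,u⟫ ∧ γ - (n:ℝ) • u ∈ Φ ∧ ‖γ - (n:ℝ)•u‖ = ‖γ‖ ∧
      (∀ a ∈ Δ, d (γ - (n:ℝ)•u) a = d γ a - (n:ℝ) * (if u = a then 1 else 0)) ∧
      (∑ a ∈ Δ, d (γ - (n:ℝ)•u) a) = (∑ a ∈ Δ, d γ a) - n := by
  have huΦ : u ∈ Φ := hB.subset hu
  obtain ⟨n, hn⟩ := hΦ.cry u huΦ γ hγ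
  refine ⟨n, hn.symm, ?_, ?_, ?_, ?_⟩
  · have := hΦ.reflect u huΦ γ hγ
    rwa [hn] at this
  · have := refl_norm (hΦ.nonzero u huΦ) γ
    rwa [hn] at this
  · intro a ha
    have h1 : d (γ - (n:ℝ)•u) a = d γ a - (n:ℝ) * d u a := by
      rw [(hdlin a).map_sub γ ((n:ℝ)•u), (hdlin a).map_smul (n:ℝ) u, smul_eq_mul]
    rw [h1, hdd u hu a ha]
  · have h2 : ∀ a ∈ Δ, d (γ - (n:ℝ)•u) a = d γ a - (n:ℝ) * (if u = a then 1 else 0) := by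
      intro a ha
      rw [(hdlin a).map_sub γ ((n:ℝ)•u), (hdlin a).map_smul (n:ℝ) u, smul_eq_mul,
        hdd u hu a ha]
    rw [Finset.sum_congr rfl h2, Finset.sum_sub_distrib]
    congr 1
    have : (∑ x ∈ Δ, (n:ℝ) * if u = x then 1 else 0) = ∑ x ∈ Δ, if u = x then (n:ℝ) else 0 := by
      apply Finset.sum_congr rfl; intro a _; by_cases h : u = a <;> simp [h]
    rw [this, Finset.sum_ite_eq Δ u (fun _ => (n:ℝ)), if_pos hu]

lemma rootLe_coord
    (hB : IsBase Φ Δ c)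
    (hdlin : ∀ a, IsLinearMap ℝ (fun x => d x a))
    (hdb : ∀ γ ∈ Φ, ∀ a ∈ Δ, d γ a = c γ a)
    {x y : E} (hxy : rootLe Φ Δ c x y) : ∀ a ∈ Δ, d x a ≤ d y a := by
  obtain ⟨f, hf, heq⟩ := hxy
  intro a ha
  have h1 : d (y - x) a = ∑ γ ∈ Φ.filter (fun γ => ∀ a ∈ Δ, 0 ≤ c γ a), f γ * d γ a := by
    rw [heq]
    have : ∀ x : E, d x a = (IsLinearMap.mk' _ (hdlin a)) x := fun _ => rfl
    rw [this, map_sum]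
    apply Finset.sum_congr rfl
    intro γ _
    rw [map_smul, smul_eq_mul, ← this]
  have h2 : 0 ≤ d (y - x) a := by
    rw [h1]
    apply Finset.sum_nonneg
    intro γ hγ
    rw [Finset.mem_filter] at hγ
    have := hdb γ hγ.1 a ha
    rw [this]
    exact mul_nonneg (hf γ) (hγ.2 a ha)
  have h3 : d (y - x) a = d y a - d x a := (hdlin a).map_sub y x
  rw [h3] at h2
  linarith

lemma simple_obtuse
    (hΦ : IsRootSystem Φ) (hB : IsBase Φ Δ c)
    (hdlin : ∀ a, IsLinearMap ℝ (fun x => d x a))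
    (hdb : ∀ γ ∈ Φ, ∀ a ∈ Δ, d γ a = c γ a)
    (hdd : ∀ a ∈ Δ, ∀ a' ∈ Δ, d a a' = (if a = a' then (1:ℝ) else 0))
    {a b : E} (ha : a ∈ Δ) (hb : b ∈ Δ) (hab : a ≠ b) : ⟪a,b⟫ ≤ 0 := by
  by_contra hpos
  push_neg at hpos
  have hδ : a - b ∈ Φ := rs_sub_mem hΦ (hB.subset ha) (hB.subset hb) hpos hab
  have hda : d (a - b) a = 1 := by
    rw [(hdlin a).map_sub a b, hdd a ha a ha, hdd b hb a ha, if_pos rfl,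
      if_neg (fun h => hab h.symm)]
    norm_num
  have hdb' : d (a - b) b = -1 := by
    rw [(hdlin b).map_sub a b, hdd a ha b hb, hdd b hb b hb, if_pos rfl, if_neg hab]
    norm_num
  have hca : c (a - b) a = 1 := by rw [← hdb _ hδ a ha]; exact hda
  have hcb : c (a - b) b = -1 := by rw [← hdb _ hδ b hb]; exact hdb'
  rcases hB.sign _ hδ with h | h
  · have := h b hb; rw [hcb] at this; linarith
  · have := h a ha; rw [hca] at this; linarith

/-- Core geometric lemma: a vector whose `S`-coordinates are a positive multiple of those of
`y`, antidominant together with `y` w.r.t. `Δ \ S` and obtuse to `y`, cannot exist. -/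
lemma core_obtuse
    (hΦ : IsRootSystem Φ) (hB : IsBase Φ Δ c)
    (hdlin : ∀ a, IsLinearMap ℝ (fun x => d x a))
    (hdb : ∀ γ ∈ Φ, ∀ a ∈ Δ, d γ a = c γ a)
    (hdd : ∀ a ∈ Δ, ∀ a' ∈ Δ, d a a' = (if a = a' then (1:ℝ) else 0))
    (hde : ∀ x : E, x = ∑ a ∈ Δ, d x a • a)
    {S : Finset E} (hS : S ⊆ Δ)
    {x y : E} {k : ℝ} (hk : 1 ≤ k)
    (hxy : ⟪x,y⟫ ≤ 0)
    (hxd : ∀ u ∈ Δ, u ∉ S → ⟪x,u⟫ ≤ 0)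
    (hyd : ∀ u ∈ Δ, u ∉ S → ⟪y,u⟫ ≤ 0)
    (hlev : ∀ a ∈ S, d x a = k * d y a)
    {a₀ : E} (ha₀S : a₀ ∈ S) (ha₀ : d y a₀ ≠ 0) : False := by
  classical
  set T := Δ \ S with hTdef
  set e : E → ℝ := fun u => d x u - k * d y u with hedef
  have hkpos : (0:ℝ) < k := lt_of_lt_of_le one_pos hk
  have hT : x - k•y = ∑ u ∈ T, e u • u := by
    have h1 : x - k•y = ∑ a ∈ Δ, d (x - k•y) a • a := hde _
    have h2 : ∀ a ∈ Δ, d (x - k•y) a = e a := by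
      intro a _
      rw [(hdlin a).map_sub x (k•y), (hdlin a).map_smul k y, smul_eq_mul]
    rw [h1, Finset.sum_congr rfl (fun a ha => by rw [h2 a ha])]
    refine (Finset.sum_subset (Finset.sdiff_subset) ?_).symm
    intro a haΔ haT
    have haS : a ∈ S := by
      by_contra haS
      exact haT (Finset.mem_sdiff.2 ⟨haΔ, haS⟩)
    have : e a = 0 := by rw [hedef]; simp only; rw [hlev a haS]; ring
    rw [this, zero_smul]
  set N := T.filter (fun u => e u < 0) with hNdef
  set Pc := T.filter (fun u => ¬ e u < 0) with hPcdef
  set P := T.filter (fun u => 0 < e u) with hPdef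
  have hsplit : (∑ u ∈ N, e u • u) + (∑ u ∈ Pc, e u • u) = ∑ u ∈ T, e u • u :=
    Finset.sum_filter_add_sum_filter_not T _ _
  have hPc : ∑ u ∈ P, e u • u = ∑ u ∈ Pc, e u • u := by
    apply Finset.sum_subset
    · intro u hu
      rw [hPdef, Finset.mem_filter] at hu
      rw [hPcdef, Finset.mem_filter]
      exact ⟨hu.1, by linarith [hu.2]⟩
    · intro u hu hup
      rw [hPcdef, Finset.mem_filter] at hu
      rw [hPdef, Finset.mem_filter] at hup
      have : e u = 0 := by
        by_contra h
        rcases lt_or_gt_of_ne h with h' | h'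
        · exact hu.2 h'
        · exact hup ⟨hu.1, h'⟩
      rw [this, zero_smul]
  set w : E := k•y + ∑ u ∈ P, e u • u with hwdef
  have hw2 : w = x + ∑ u ∈ N, (-(e u)) • u := by
    have hx : x = k•y + ∑ u ∈ T, e u • u := by
      have := hT; rw [sub_eq_iff_eq_add] at this; rw [this]; abel
    rw [hwdef, hx, hPc, ← hsplit]
    have : ∑ u ∈ N, (-(e u)) • u = -∑ u ∈ N, e u • u := by
      rw [← Finset.sum_neg_distrib]
      apply Finset.sum_congr rfl
      intro u _; rw [neg_smul]
    rw [this]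
    abel
  have hTsub : T ⊆ Δ := Finset.sdiff_subset
  have hTS : ∀ u ∈ T, u ∈ Δ ∧ u ∉ S := fun u hu => Finset.mem_sdiff.1 hu
  have hinner : ⟪w, w⟫ ≤ 0 := by
    nth_rewrite 1 [hw2]
    rw [hwdef]
    rw [inner_add_left, inner_add_right, inner_add_right]
    have t1 : ⟪x, k•y⟫ ≤ 0 := by
      rw [real_inner_smul_right]
      exact mul_nonpos_of_nonneg_of_nonpos (le_of_lt hkpos) hxy
    have t2 : ⟪x, ∑ u ∈ P, e u • u⟫ ≤ 0 := by
      rw [inner_sum]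
      apply Finset.sum_nonpos
      intro u hu
      rw [hPdef, Finset.mem_filter] at hu
      obtain ⟨huΔ, huS⟩ := hTS u hu.1
      rw [real_inner_smul_right]
      exact mul_nonpos_of_nonneg_of_nonpos (le_of_lt hu.2) (hxd u huΔ huS)
    have t3 : ⟪∑ u ∈ N, (-(e u)) • u, k•y⟫ ≤ 0 := by
      rw [sum_inner]
      apply Finset.sum_nonpos
      intro u hu
      rw [hNdef, Finset.mem_filter] at hu
      obtain ⟨huΔ, huS⟩ := hTS u hu.1
      rw [real_inner_smul_left, real_inner_smul_right]
      have h1 : 0 ≤ -(e u) := by linarith [hu.2]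
      have h2 : ⟪u,y⟫ ≤ 0 := by rw [real_inner_comm]; exact hyd u huΔ huS
      have : k * ⟪u,y⟫ ≤ 0 := mul_nonpos_of_nonneg_of_nonpos (le_of_lt hkpos) h2
      exact mul_nonpos_of_nonneg_of_nonpos h1 this
    have t4 : ⟪∑ u ∈ N, (-(e u)) • u, ∑ v ∈ P, e v • v⟫ ≤ 0 := by
      rw [sum_inner]
      apply Finset.sum_nonpos
      intro u hu
      rw [inner_sum]
      apply Finset.sum_nonpos
      intro v hv
      rw [hNdef, Finset.mem_filter] at hu
      rw [hPdef, Finset.mem_filter] at hv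
      obtain ⟨huΔ, _⟩ := hTS u hu.1
      obtain ⟨hvΔ, _⟩ := hTS v hv.1
      have huv : u ≠ v := by
        intro h; rw [h] at hu; linarith [hu.2, hv.2]
      rw [real_inner_smul_left, real_inner_smul_right]
      have h1 : 0 ≤ -(e u) := by linarith [hu.2]
      have h2 : ⟪u,v⟫ ≤ 0 := simple_obtuse hΦ hB hdlin hdb hdd huΔ hvΔ huv
      have : e v * ⟪u,v⟫ ≤ 0 := mul_nonpos_of_nonneg_of_nonpos (le_of_lt hv.2) h2
      exact mul_nonpos_of_nonneg_of_nonpos h1 this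
    linarith
  have hw0 : w = 0 := real_inner_self_nonpos.1 hinner
  have hda₀ : d w a₀ = k * d y a₀ := by
    have ha₀Δ : a₀ ∈ Δ := hS ha₀S
    have L := IsLinearMap.mk' _ (hdlin a₀)
    have hLd : ∀ z : E, d z a₀ = (IsLinearMap.mk' _ (hdlin a₀)) z := fun _ => rfl
    rw [hwdef, hLd, map_add, map_smul, map_sum]
    have : ∀ u ∈ P, (IsLinearMap.mk' _ (hdlin a₀)) (e u • u) = 0 := by
      intro u hu
      rw [hPdef, Finset.mem_filter] at hu
      obtain ⟨huΔ, huS⟩ := hTS u hu.1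
      have hune : u ≠ a₀ := fun h => huS (h ▸ ha₀S)
      rw [map_smul, smul_eq_mul, ← hLd, hdd u huΔ a₀ ha₀Δ, if_neg hune, mul_zero]
    rw [Finset.sum_congr rfl this, Finset.sum_const_zero, add_zero, smul_eq_mul, ← hLd]
  rw [hw0] at hda₀
  have : d (0:E) a₀ = 0 := (hdlin a₀).map_zero
  rw [this] at hda₀
  have := mul_ne_zero (ne_of_gt hkpos) ha₀
  exact this hda₀.symm

lemma mu_decrease {Φ : Finset E} {g : E → ℝ} {γ γ' : E} (hγ'Φ : γ' ∈ Φ) (hlt : g γ' < g γ) :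
    (Φ.filter (fun δ => g δ < g γ')).card < (Φ.filter (fun δ => g δ < g γ)).card := by
  apply Finset.card_lt_card
  rw [Finset.ssubset_def]
  constructor
  · intro δ hδ
    rw [Finset.mem_filter] at hδ ⊢
    exact ⟨hδ.1, lt_trans hδ.2 hlt⟩
  · intro hsub
    have : γ' ∈ Φ.filter (fun δ => g δ < g γ) := Finset.mem_filter.2 ⟨hγ'Φ, hlt⟩
    have := hsub this
    rw [Finset.mem_filter] at this
    exact lt_irrefl _ this.2

lemma lemA
    (hΦ : IsRootSystem Φ) (hB : IsBase Φ Δ c)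
    (hdlin : ∀ a, IsLinearMap ℝ (fun x => d x a))
    (hdb : ∀ γ ∈ Φ, ∀ a ∈ Δ, d γ a = c γ a)
    (hdd : ∀ a ∈ Δ, ∀ a' ∈ Δ, d a a' = (if a = a' then (1:ℝ) else 0))
    (hde : ∀ x : E, x = ∑ a ∈ Δ, d x a • a)
    {S : Finset E} (hS : S ⊆ Δ) {β : E} (hβ : β ∈ Φ)
    {a₀ : E} (ha₀S : a₀ ∈ S) (ha₀pos : 0 < d β a₀)
    {m : E} (hmlev : m ∈ lev Φ c S β) (hmmin : ∀ γ ∈ lev Φ c S β, rootLe Φ Δ c m γ) :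
    ∀ γ ∈ Φ, ∀ k : ℤ, 1 ≤ k → (∀ a ∈ S, d γ a = (k:ℝ) * d β a) →
      ∀ u ∈ Δ, (k:ℝ) * d m u ≤ d γ u := by
  classical
  have ha₀Δ : a₀ ∈ Δ := hS ha₀S
  obtain ⟨hmΦ, hmc⟩ := hmlev
  have hmd : ∀ a ∈ S, d m a = d β a := by
    intro a haS
    rw [hdb m hmΦ a (hS haS), hdb β hβ a (hS haS)]
    exact hmc a haS
  -- any root whose S-coordinates (in d) equal those of β lies in `lev`
  have hmemlev : ∀ γ ∈ Φ, (∀ a ∈ S, d γ a = d β a) → γ ∈ lev Φ c S β := by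
    intro γ hγ hcd
    refine ⟨hγ, fun a haS => ?_⟩
    rw [← hdb γ hγ a (hS haS), ← hdb β hβ a (hS haS)]
    exact hcd a haS
  -- m is antidominant with respect to Δ \ S
  have hanti : ∀ u ∈ Δ, u ∉ S → ⟪m,u⟫ ≤ 0 := by
    intro u huΔ huS
    by_contra hpos
    push_neg at hpos
    obtain ⟨n, hn, hmem, _, hcoord, _⟩ := refl_step hΦ hB hdlin hdd hmΦ huΔ
    have hnpos : 0 < (n:ℝ) := by
      rw [hn]
      have := ips_pos (hΦ.nonzero u (hB.subset huΔ))
      positivity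
    have hlev' : m - (n:ℝ)•u ∈ lev Φ c S β := by
      apply hmemlev _ hmem
      intro a haS
      rw [hcoord a (hS haS), if_neg (fun h : u = a => huS (h ▸ haS)), mul_zero, sub_zero]
      exact hmd a haS
    have := rootLe_coord hB hdlin hdb (hmmin _ hlev') u huΔ
    rw [hcoord u huΔ, if_pos rfl, mul_one] at this
    linarith
  -- height of m is positive
  have hmsign : ∀ a ∈ Δ, 0 ≤ d m a := by
    intro a haΔ
    rw [hdb m hmΦ a haΔ]
    rcases hB.sign m hmΦ with h | h
    · exact h a haΔ
    · exfalso
      have := h a₀ ha₀Δ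
      have h2 : c m a₀ = d m a₀ := (hdb m hmΦ a₀ ha₀Δ).symm
      rw [h2, hmd a₀ ha₀S] at this
      linarith
  have hgtm : 0 < ∑ a ∈ Δ, d m a := by
    have h1 : d m a₀ ≤ ∑ a ∈ Δ, d m a := Finset.single_le_sum (fun a ha => hmsign a ha) ha₀Δ
    have h2 : 0 < d m a₀ := by rw [hmd a₀ ha₀S]; exact ha₀pos
    linarith
  set g : E → ℝ := fun x => ∑ a ∈ Δ, d x a with hgdef
  have main : ∀ n : ℕ, ∀ γ, γ ∈ Φ → (Φ.filter (fun δ => g δ < g γ)).card ≤ n →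
      ∀ k : ℤ, 1 ≤ k → (∀ a ∈ S, d γ a = (k:ℝ) * d β a) →
      ∀ u ∈ Δ, (k:ℝ) * d m u ≤ d γ u := by
    intro n
    induction n using Nat.strong_induction_on with
    | _ n ih =>
      intro γ hγ hμ k hk hklev u hu
      by_cases hk1 : k = 1
      · subst hk1
        have hγlev : γ ∈ lev Φ c S β := by
          apply hmemlev γ hγ
          intro a haS
          rw [hklev a haS]
          push_cast
          ring
        have := rootLe_coord hB hdlin hdb (hmmin γ hγlev) u hu
        push_cast
        linarith
      · have hk2 : 2 ≤ k := by omega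
        by_cases hdom : ∀ u' ∈ Δ, u' ∉ S → ⟪γ,u'⟫ ≤ 0
        · -- antidominant case: subtract m
          have hne : γ ≠ m := by
            intro h
            subst h
            have h1 := hklev a₀ ha₀S
            rw [hmd a₀ ha₀S] at h1
            have : ((k:ℝ) - 1) * d β a₀ = 0 := by linarith
            rcases mul_eq_zero.1 this with h2 | h2
            · have : (k:ℝ) = 1 := by linarith
              exact hk1 (by exact_mod_cast this)
            · linarith
          have hgm : 0 < ⟪γ,m⟫ := by
            by_contra hle
            push_neg at hle
            exact core_obtuse hΦ hB hdlin hdb hdd hde hS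
              (by exact_mod_cast hk : (1:ℝ) ≤ (k:ℝ)) hle hdom hanti
              (fun a haS => by rw [hklev a haS, hmd a haS]) ha₀S
              (by rw [hmd a₀ ha₀S]; exact ne_of_gt ha₀pos)
          have hδ : γ - m ∈ Φ := rs_sub_mem hΦ hγ hmΦ hgm hne
          have hδlev : ∀ a ∈ S, d (γ - m) a = ((k-1 : ℤ):ℝ) * d β a := by
            intro a haS
            rw [(hdlin a).map_sub γ m, hklev a haS, hmd a haS]
            push_cast
            ring
          have hgsub : g (γ - m) = g γ - g m := by
            rw [hgdef]
            simp only
            rw [← Finset.sum_sub_distrib]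
            apply Finset.sum_congr rfl
            intro a _
            exact (hdlin a).map_sub γ m
          have hglt : g (γ - m) < g γ := by
            rw [hgsub]
            have : g m = ∑ a ∈ Δ, d m a := rfl
            linarith [hgtm]
          have hμ' : (Φ.filter (fun δ => g δ < g (γ - m))).card < n := by
            calc (Φ.filter (fun δ => g δ < g (γ - m))).card
                < (Φ.filter (fun δ => g δ < g γ)).card := mu_decrease hδ hglt
              _ ≤ n := hμ
          have := ih _ hμ' (γ - m) hδ le_rfl (k-1) (by omega) hδlev u hu
          have hsub : d (γ - m) u = d γ u - d m u := (hdlin u).map_sub γ m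
          rw [hsub] at this
          push_cast at this ⊢
          linarith
        · -- reflection case
          push_neg at hdom
          obtain ⟨u', hu'Δ, hu'S, hpos⟩ := hdom
          obtain ⟨n', hn', hmem, _, hcoord, hgt'⟩ := refl_step hΦ hB hdlin hdd hγ hu'Δ
          have hn'pos : 0 < (n':ℝ) := by
            rw [hn']
            have := ips_pos (hΦ.nonzero u' (hB.subset hu'Δ))
            positivity
          have hn'1 : 1 ≤ (n':ℝ) := by exact_mod_cast (by exact_mod_cast hn'pos : (0:ℤ) < n')
          have hlev' : ∀ a ∈ S, d (γ - (n':ℝ)•u') a = (k:ℝ) * d β a := by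
            intro a haS
            rw [hcoord a (hS haS), if_neg (fun h : u' = a => hu'S (h ▸ haS)), mul_zero, sub_zero]
            exact hklev a haS
          have hglt : g (γ - (n':ℝ)•u') < g γ := by
            rw [hgdef]
            simp only
            rw [hgt']
            linarith
          have hμ' : (Φ.filter (fun δ => g δ < g (γ - (n':ℝ)•u'))).card < n := by
            calc (Φ.filter (fun δ => g δ < g (γ - (n':ℝ)•u'))).card
                < (Φ.filter (fun δ => g δ < g γ)).card := mu_decrease hmem hglt
              _ ≤ n := hμ
          have hres := ih _ hμ' _ hmem le_rfl k hk hlev' u hu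
          have hcu := hcoord u hu
          by_cases huu : u' = u
          · rw [hcu, if_pos huu, mul_one] at hres
            linarith
          · rw [hcu, if_neg huu, mul_zero, sub_zero] at hres
            exact hres
  intro γ hγ k hk hklev u hu
  exact main _ γ hγ le_rfl k hk hklev u hu

lemma lemB
    (hΦ : IsRootSystem Φ) (hB : IsBase Φ Δ c)
    (hdlin : ∀ a, IsLinearMap ℝ (fun x => d x a))
    (hdb : ∀ γ ∈ Φ, ∀ a ∈ Δ, d γ a = c γ a)
    (hdd : ∀ a ∈ Δ, ∀ a' ∈ Δ, d a a' = (if a = a' then (1:ℝ) else 0))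
    (hde : ∀ x : E, x = ∑ a ∈ Δ, d x a • a)
    {S : Finset E} (hS : S ⊆ Δ) {β : E} (hβ : β ∈ Φ)
    {a₀ : E} (ha₀S : a₀ ∈ S) (ha₀pos : 0 < d β a₀)
    {M : E} (hMlev : M ∈ lev Φ c S β) (hMmax : ∀ γ ∈ lev Φ c S β, rootLe Φ Δ c γ M) :
    ∀ γ ∈ Φ, ∀ k : ℤ, 1 ≤ k → (∀ a ∈ S, d γ a = (k:ℝ) * d β a) →
      ∀ u ∈ Δ, d γ u ≤ (k:ℝ) * d M u := by
  classical
  have ha₀Δ : a₀ ∈ Δ := hS ha₀S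
  obtain ⟨hMΦ, hMc⟩ := hMlev
  have hMd : ∀ a ∈ S, d M a = d β a := by
    intro a haS
    rw [hdb M hMΦ a (hS haS), hdb β hβ a (hS haS)]
    exact hMc a haS
  have hmemlev : ∀ γ ∈ Φ, (∀ a ∈ S, d γ a = d β a) → γ ∈ lev Φ c S β := by
    intro γ hγ hcd
    refine ⟨hγ, fun a haS => ?_⟩
    rw [← hdb γ hγ a (hS haS), ← hdb β hβ a (hS haS)]
    exact hcd a haS
  -- M is dominant with respect to Δ \ S
  have hdomM : ∀ u ∈ Δ, u ∉ S → 0 ≤ ⟪M,u⟫ := by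
    intro u huΔ huS
    by_contra hneg
    push_neg at hneg
    obtain ⟨n, hn, hmem, _, hcoord, _⟩ := refl_step hΦ hB hdlin hdd hMΦ huΔ
    have hnneg : (n:ℝ) < 0 := by
      rw [hn]
      have huu := ips_pos (hΦ.nonzero u (hB.subset huΔ))
      apply div_neg_of_neg_of_pos _ huu
      linarith
    have hlev' : M - (n:ℝ)•u ∈ lev Φ c S β := by
      apply hmemlev _ hmem
      intro a haS
      rw [hcoord a (hS haS), if_neg (fun h : u = a => huS (h ▸ haS)), mul_zero, sub_zero]
      exact hMd a haS
    have := rootLe_coord hB hdlin hdb (hMmax _ hlev') u huΔ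
    rw [hcoord u huΔ, if_pos rfl, mul_one] at this
    linarith
  set g : E → ℝ := fun x => -∑ a ∈ Δ, d x a with hgdef
  have hMsign : ∀ a ∈ Δ, 0 ≤ d M a := by
    intro a haΔ
    rw [hdb M hMΦ a haΔ]
    rcases hB.sign M hMΦ with h | h
    · exact h a haΔ
    · exfalso
      have := h a₀ ha₀Δ
      have h2 : c M a₀ = d M a₀ := (hdb M hMΦ a₀ ha₀Δ).symm
      rw [h2, hMd a₀ ha₀S] at this
      linarith
  have hgtM : 0 < ∑ a ∈ Δ, d M a := by
    have h1 : d M a₀ ≤ ∑ a ∈ Δ, d M a := Finset.single_le_sum (fun a ha => hMsign a ha) ha₀Δ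
    have h2 : 0 < d M a₀ := by rw [hMd a₀ ha₀S]; exact ha₀pos
    linarith
  have outer : ∀ j : ℕ, ∀ γ ∈ Φ, (∀ a ∈ S, d γ a = ((j:ℝ)+1) * d β a) →
      ∀ u ∈ Δ, d γ u ≤ ((j:ℝ)+1) * d M u := by
    intro j
    induction j using Nat.strong_induction_on with
    | _ j ihj =>
      have inner : ∀ nμ : ℕ, ∀ γ ∈ Φ, (∀ a ∈ S, d γ a = ((j:ℝ)+1) * d β a) →
          (Φ.filter (fun δ => g δ < g γ)).card ≤ nμ →
          ∀ u ∈ Δ, d γ u ≤ ((j:ℝ)+1) * d M u := by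
        intro nμ
        induction nμ using Nat.strong_induction_on with
        | _ nμ ihn =>
          intro γ hγ hklev hμ u hu
          by_cases hdom : ∀ u' ∈ Δ, u' ∉ S → 0 ≤ ⟪γ,u'⟫
          · -- dominant case
            match j with
            | 0 =>
              have hγlev : γ ∈ lev Φ c S β := by
                apply hmemlev γ hγ
                intro a haS
                rw [hklev a haS]
                norm_num
              have := rootLe_coord hB hdlin hdb (hMmax γ hγlev) u hu
              push_cast
              linarith
            | (j'+1) =>
              have hne : γ ≠ M := by
                intro h
                subst h
                have h1 := hklev a₀ ha₀S
                rw [hMd a₀ ha₀S] at h1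
                have h3 : ((j':ℝ)+1) * d β a₀ = 0 := by push_cast at h1 ⊢; nlinarith
                rcases mul_eq_zero.1 h3 with h2 | h2
                · have : (0:ℝ) ≤ (j':ℝ) := Nat.cast_nonneg j'
                  linarith
                · linarith
              have hgm : 0 < ⟪γ,M⟫ := by
                by_contra hle
                push_neg at hle
                refine core_obtuse hΦ hB hdlin hdb hdd hde hS
                  (k := (j':ℝ)+1+1) (by have := Nat.cast_nonneg (α := ℝ) j'; linarith) (x := -γ) (y := -M) ?_ ?_ ?_ ?_ ha₀S ?_
                · rw [inner_neg_neg]; exact hle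
                · intro u' hu' hu'S
                  rw [inner_neg_left]
                  simp only [neg_nonpos]
                  exact hdom u' hu' hu'S
                · intro u' hu' hu'S
                  rw [inner_neg_left]
                  simp only [neg_nonpos]
                  exact hdomM u' hu' hu'S
                · intro a haS
                  rw [(hdlin a).map_neg γ, (hdlin a).map_neg M, hklev a haS, hMd a haS]
                  push_cast
                  ring
                · rw [(hdlin a₀).map_neg M, hMd a₀ ha₀S]
                  simpa using ne_of_gt ha₀pos
              have hδ : γ - M ∈ Φ := rs_sub_mem hΦ hγ hMΦ hgm hne
              have hδlev : ∀ a ∈ S, d (γ - M) a = ((j':ℝ)+1) * d β a := by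
                intro a haS
                rw [(hdlin a).map_sub γ M, hklev a haS, hMd a haS]
                push_cast
                ring
              have hres := ihj j' (Nat.lt_succ_self j') (γ - M) hδ hδlev u hu
              have hsub : d (γ - M) u = d γ u - d M u := (hdlin u).map_sub γ M
              rw [hsub] at hres
              have hMu : 0 ≤ d M u := hMsign u hu
              push_cast at hres ⊢
              nlinarith
          · -- reflection case: move up
            push_neg at hdom
            obtain ⟨u', hu'Δ, hu'S, hneg⟩ := hdom
            obtain ⟨n', hn', hmem, _, hcoord, hgt'⟩ := refl_step hΦ hB hdlin hdd hγ hu'Δ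
            have hn'neg : (n':ℝ) < 0 := by
              rw [hn']
              have huu := ips_pos (hΦ.nonzero u' (hB.subset hu'Δ))
              apply div_neg_of_neg_of_pos _ huu
              linarith
            have hlev' : ∀ a ∈ S, d (γ - (n':ℝ)•u') a = ((j:ℝ)+1) * d β a := by
              intro a haS
              rw [hcoord a (hS haS), if_neg (fun h : u' = a => hu'S (h ▸ haS)), mul_zero,
                sub_zero]
              exact hklev a haS
            have hglt : g (γ - (n':ℝ)•u') < g γ := by
              rw [hgdef]
              simp only [neg_lt_neg_iff]
              rw [hgt']
              linarith
            have hμ' : (Φ.filter (fun δ => g δ < g (γ - (n':ℝ)•u'))).card < nμ := by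
              calc (Φ.filter (fun δ => g δ < g (γ - (n':ℝ)•u'))).card
                  < (Φ.filter (fun δ => g δ < g γ)).card := mu_decrease hmem hglt
                _ ≤ nμ := hμ
            have hres := ihn _ hμ' _ hmem hlev' le_rfl u hu
            have hcu := hcoord u hu
            by_cases huu : u' = u
            · rw [hcu, if_pos huu, mul_one] at hres
              linarith
            · rw [hcu, if_neg huu, mul_zero, sub_zero] at hres
              exact hres
      intro γ hγ hklev u hu
      exact inner _ γ hγ hklev le_rfl u hu
  intro γ hγ k hk hklev u hu
  obtain ⟨j, hj⟩ : ∃ j : ℕ, (j:ℤ) = k - 1 := ⟨(k-1).toNat, Int.toNat_of_nonneg (by omega)⟩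
  have hcast : ((j:ℝ)+1) = (k:ℝ) := by
    have : ((j:ℤ):ℝ) = (k:ℝ) - 1 := by exact_mod_cast congrArg (Int.cast : ℤ → ℝ) hj
    push_cast at this ⊢
    linarith
  rw [← hcast]
  exact outer j γ hγ (fun a haS => by rw [hklev a haS, ← hcast]) u hu

lemma rep_dom
    (hΦ : IsRootSystem Φ) (hB : IsBase Φ Δ c)
    (hdlin : ∀ a, IsLinearMap ℝ (fun x => d x a))
    (hdd : ∀ a ∈ Δ, ∀ a' ∈ Δ, d a a' = (if a = a' then (1:ℝ) else 0))
    {S : Finset E} (hS : S ⊆ Δ) {β : E} :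
    ∀ γ, γ ∈ Φ → (∀ a ∈ S, d γ a = d β a) →
      ∃ δ, δ ∈ Φ ∧ (∀ a ∈ S, d δ a = d β a) ∧ ‖δ‖ = ‖γ‖ ∧
        (∀ u ∈ Δ, u ∉ S → 0 ≤ ⟪δ,u⟫) := by
  classical
  set g : E → ℝ := fun x => -∑ a ∈ Δ, d x a with hgdef
  have main : ∀ n : ℕ, ∀ γ, γ ∈ Φ → (∀ a ∈ S, d γ a = d β a) →
      (Φ.filter (fun δ => g δ < g γ)).card ≤ n →
      ∃ δ, δ ∈ Φ ∧ (∀ a ∈ S, d δ a = d β a) ∧ ‖δ‖ = ‖γ‖ ∧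
        (∀ u ∈ Δ, u ∉ S → 0 ≤ ⟪δ,u⟫) := by
    intro n
    induction n using Nat.strong_induction_on with
    | _ n ih =>
      intro γ hγ hlev hμ
      by_cases hdom : ∀ u ∈ Δ, u ∉ S → 0 ≤ ⟪γ,u⟫
      · exact ⟨γ, hγ, hlev, rfl, hdom⟩
      · push_neg at hdom
        obtain ⟨u', hu'Δ, hu'S, hneg⟩ := hdom
        obtain ⟨n', hn', hmem, hnorm, hcoord, hgt'⟩ := refl_step hΦ hB hdlin hdd hγ hu'Δ
        have hn'neg : (n':ℝ) < 0 := by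
          rw [hn']
          have huu := ips_pos (hΦ.nonzero u' (hB.subset hu'Δ))
          apply div_neg_of_neg_of_pos _ huu
          linarith
        have hlev' : ∀ a ∈ S, d (γ - (n':ℝ)•u') a = d β a := by
          intro a haS
          rw [hcoord a (hS haS), if_neg (fun h : u' = a => hu'S (h ▸ haS)), mul_zero, sub_zero]
          exact hlev a haS
        have hglt : g (γ - (n':ℝ)•u') < g γ := by
          rw [hgdef]
          simp only [neg_lt_neg_iff]
          rw [hgt']
          linarith
        have hμ' : (Φ.filter (fun δ => g δ < g (γ - (n':ℝ)•u'))).card < n :=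
          lt_of_lt_of_le (mu_decrease hmem hglt) hμ
        obtain ⟨δ, h1, h2, h3, h4⟩ := ih _ hμ' _ hmem hlev' le_rfl
        exact ⟨δ, h1, h2, h3.trans hnorm, h4⟩
  intro γ hγ hlev
  exact main _ γ hγ hlev le_rfl

lemma rep_anti
    (hΦ : IsRootSystem Φ) (hB : IsBase Φ Δ c)
    (hdlin : ∀ a, IsLinearMap ℝ (fun x => d x a))
    (hdd : ∀ a ∈ Δ, ∀ a' ∈ Δ, d a a' = (if a = a' then (1:ℝ) else 0))
    {S : Finset E} (hS : S ⊆ Δ) {β : E} :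
    ∀ γ, γ ∈ Φ → (∀ a ∈ S, d γ a = d β a) →
      ∃ δ, δ ∈ Φ ∧ (∀ a ∈ S, d δ a = d β a) ∧ ‖δ‖ = ‖γ‖ ∧
        (∀ u ∈ Δ, u ∉ S → ⟪δ,u⟫ ≤ 0) := by
  classical
  set g : E → ℝ := fun x => ∑ a ∈ Δ, d x a with hgdef
  have main : ∀ n : ℕ, ∀ γ, γ ∈ Φ → (∀ a ∈ S, d γ a = d β a) →
      (Φ.filter (fun δ => g δ < g γ)).card ≤ n →
      ∃ δ, δ ∈ Φ ∧ (∀ a ∈ S, d δ a = d β a) ∧ ‖δ‖ = ‖γ‖ ∧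
        (∀ u ∈ Δ, u ∉ S → ⟪δ,u⟫ ≤ 0) := by
    intro n
    induction n using Nat.strong_induction_on with
    | _ n ih =>
      intro γ hγ hlev hμ
      by_cases hdom : ∀ u ∈ Δ, u ∉ S → ⟪γ,u⟫ ≤ 0
      · exact ⟨γ, hγ, hlev, rfl, hdom⟩
      · push_neg at hdom
        obtain ⟨u', hu'Δ, hu'S, hpos⟩ := hdom
        obtain ⟨n', hn', hmem, hnorm, hcoord, hgt'⟩ := refl_step hΦ hB hdlin hdd hγ hu'Δ
        have hn'pos : 0 < (n':ℝ) := by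
          rw [hn']
          have huu := ips_pos (hΦ.nonzero u' (hB.subset hu'Δ))
          positivity
        have hlev' : ∀ a ∈ S, d (γ - (n':ℝ)•u') a = d β a := by
          intro a haS
          rw [hcoord a (hS haS), if_neg (fun h : u' = a => hu'S (h ▸ haS)), mul_zero, sub_zero]
          exact hlev a haS
        have hglt : g (γ - (n':ℝ)•u') < g γ := by
          rw [hgdef]
          simp only
          rw [hgt']
          linarith
        have hμ' : (Φ.filter (fun δ => g δ < g (γ - (n':ℝ)•u'))).card < n :=
          lt_of_lt_of_le (mu_decrease hmem hglt) hμ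
        obtain ⟨δ, h1, h2, h3, h4⟩ := ih _ hμ' _ hmem hlev' le_rfl
        exact ⟨δ, h1, h2, h3.trans hnorm, h4⟩
  intro γ hγ hlev
  exact main _ γ hγ hlev le_rfl

end Main

/-- Both `{min Φ_{S,β}} ∪ (Π \ S)` and `{-max Φ_{S,β}} ∪ (Π \ S)` are simple systems
of the root subsystem `Φ_{S,ℤβ}`; in particular the minimum and the maximum of
`Φ_{S,β}` have the same length. -/
theorem stmt6 (Φ Δ : Finset E) (c : E → E → ℝ)
    (hΦ : IsRootSystem Φ) (hB : IsBase Φ Δ c) (hirr : IsIrredSys Φ)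
    (S : Finset E) (hS : S ⊆ Δ) (β : E) (hβ : β ∈ Φ)
    (hβpos : ∀ a ∈ Δ, 0 ≤ c β a) (hsupp : ∃ a ∈ S, c β a ≠ 0)
    (m M : E)
    (hm : m ∈ lev Φ c S β ∧ ∀ γ ∈ lev Φ c S β, rootLe Φ Δ c m γ)
    (hM : M ∈ lev Φ c S β ∧ ∀ γ ∈ lev Φ c S β, rootLe Φ Δ c γ M) :
    IsSimpleSystem (levZ Φ c S β) (insert m (Δ \ S)) ∧
    IsSimpleSystem (levZ Φ c S β) (insert (-M) (Δ \ S)) ∧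
    ‖m‖ = ‖M‖ := by
  classical
  obtain ⟨d, hdlin, hdb, hdd, hde⟩ := (exists_coordData Φ Δ c hΦ hB).out
  obtain ⟨a₀, ha₀S, ha₀ne⟩ := hsupp
  have ha₀Δ : a₀ ∈ Δ := hS ha₀S
  have ha₀pos : 0 < d β a₀ := by
    rw [hdb β hβ a₀ ha₀Δ]
    exact lt_of_le_of_ne (hβpos a₀ ha₀Δ) (Ne.symm ha₀ne)
  obtain ⟨hmΦ, hmc⟩ := hm.1
  obtain ⟨hMΦ, hMc⟩ := hM.1
  have hmd : ∀ a ∈ S, d m a = d β a := by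
    intro a haS
    rw [hdb m hmΦ a (hS haS), hdb β hβ a (hS haS)]
    exact hmc a haS
  have hMd : ∀ a ∈ S, d M a = d β a := by
    intro a haS
    rw [hdb M hMΦ a (hS haS), hdb β hβ a (hS haS)]
    exact hMc a haS
  have hmemlev : ∀ γ ∈ Φ, (∀ a ∈ S, d γ a = d β a) → γ ∈ lev Φ c S β := by
    intro γ hγ hcd
    refine ⟨hγ, fun a haS => ?_⟩
    rw [← hdb γ hγ a (hS haS), ← hdb β hβ a (hS haS)]
    exact hcd a haS
  have hint : ∀ γ ∈ Φ, ∀ u ∈ Δ, ∃ n : ℤ, d γ u = (n:ℝ) := by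
    intro γ hγ u hu
    rw [hdb γ hγ u hu]
    exact hB.int γ hγ u hu
  -- the a₀ coordinate vanishes on the span of Δ \ S
  have hspan0 : ∀ z ∈ Submodule.span ℝ ((Δ \ S : Finset E) : Set E), d z a₀ = 0 := by
    intro z hz
    induction hz using Submodule.span_induction with
    | mem u hu =>
      have hu' := Finset.mem_coe.1 hu
      rw [Finset.mem_sdiff] at hu'
      have hne : u ≠ a₀ := fun h => hu'.2 (h ▸ ha₀S)
      rw [hdd u hu'.1 a₀ ha₀Δ, if_neg hne]
    | zero => exact (hdlin a₀).map_zero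
    | add u v _ _ hu hv => rw [(hdlin a₀).map_add u v, hu, hv, add_zero]
    | smul t u _ hu => rw [(hdlin a₀).map_smul t u, hu, smul_zero]
  -- expansion of vectors with vanishing S-coordinates
  have hexpT : ∀ z : E, (∀ a ∈ S, d z a = 0) → z = ∑ u ∈ Δ \ S, d z u • u := by
    intro z hz
    conv_lhs => rw [hde z]
    refine (Finset.sum_subset (Finset.sdiff_subset) ?_).symm
    intro a haΔ haT
    have haS : a ∈ S := by
      by_contra haS
      exact haT (Finset.mem_sdiff.2 ⟨haΔ, haS⟩)
    have h2 : d z a = 0 := hz a haS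
    rw [h2, zero_smul]
  -- generic construction of a simple system with apex w
  have mkSimple : ∀ (w : E) (ε : ℤ), w ∈ Φ → (ε = 1 ∨ ε = -1) →
      (∀ a ∈ S, d w a = (ε:ℝ) * d β a) →
      (∀ γ ∈ Φ, ∀ k : ℤ, 1 ≤ k → (∀ a ∈ S, d γ a = (k:ℝ) * d β a) →
        ∀ u ∈ Δ, u ∉ S → 0 ≤ (ε:ℝ) * (d γ u - ((k*ε : ℤ):ℝ) * d w u)) →
      IsSimpleSystem (levZ Φ c S β) (insert w (Δ \ S)) := by
    intro w ε hwΦ hε hwS hbound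
    have hε2 : (ε:ℝ) * (ε:ℝ) = 1 := by rcases hε with h | h <;> rw [h] <;> norm_num
    have hwa₀ : d w a₀ ≠ 0 := by
      rw [hwS a₀ ha₀S]
      rcases hε with h | h <;> rw [h] <;> push_cast <;>
        [exact ne_of_gt (by linarith); exact ne_of_lt (by linarith)]
    have hwspan : w ∉ Submodule.span ℝ ((Δ \ S : Finset E) : Set E) := by
      intro hsp
      exact hwa₀ (hspan0 w hsp)
    have hwT : w ∉ Δ \ S := by
      intro hw
      exact hwspan (Submodule.subset_span (Finset.mem_coe.2 hw))
    refine ⟨?_, ?_, ?_⟩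
    · -- subset
      intro b hb
      rw [Finset.coe_insert, Set.mem_insert_iff] at hb
      rcases hb with hb | hb
      · rw [hb]
        refine ⟨hwΦ, ε, fun a haS => ?_⟩
        rw [← hdb w hwΦ a (hS haS), ← hdb β hβ a (hS haS)]
        exact hwS a haS
      · have hb' := Finset.mem_coe.1 hb
        rw [Finset.mem_sdiff] at hb'
        refine ⟨hB.subset hb'.1, 0, fun a haS => ?_⟩
        rw [← hdb b (hB.subset hb'.1) a (hS haS)]
        have hne : b ≠ a := fun h => hb'.2 (h ▸ haS)
        rw [hdd b hb'.1 a (hS haS), if_neg hne]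
        push_cast
        ring
    · -- linear independence
      rw [Finset.coe_insert]
      refine LinearIndepOn.id_insert ?_ hwspan
      exact LinearIndepOn.mono (v := id) hB.indep (by intro x hx; exact Finset.mem_coe.2 (Finset.sdiff_subset
        (Finset.mem_coe.1 hx)))
    · -- representation with uniform signs
      rintro γ ⟨hγΦ, k, hkc⟩
      have hkd : ∀ a ∈ S, d γ a = (k:ℝ) * d β a := by
        intro a haS
        rw [hdb γ hγΦ a (hS haS), hdb β hβ a (hS haS)]
        exact hkc a haS
      set f : E → ℤ := fun x => if x = w then k*ε else
        ⌊d γ x - ((k*ε : ℤ):ℝ) * d w x⌋ with hfdef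
      have hfval : ∀ u ∈ Δ \ S, (f u : ℝ) = d γ u - ((k*ε : ℤ):ℝ) * d w u := by
        intro u hu
        have huΔ : u ∈ Δ := Finset.sdiff_subset hu
        have hune : u ≠ w := fun h => hwT (h ▸ hu)
        obtain ⟨n1, hn1⟩ := hint γ hγΦ u huΔ
        obtain ⟨n2, hn2⟩ := hint w hwΦ u huΔ
        rw [hfdef]
        simp only [if_neg hune]
        rw [hn1, hn2]
        have : (n1:ℝ) - ((k*ε : ℤ):ℝ) * (n2:ℝ) = ((n1 - k*ε*n2 : ℤ) : ℝ) := by push_cast; ring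
        rw [this, Int.floor_intCast]
      have hzero : ∀ a ∈ S, d (γ - ((k*ε : ℤ):ℝ) • w) a = 0 := by
        intro a haS
        rw [(hdlin a).map_sub γ _, (hdlin a).map_smul _ w, smul_eq_mul, hkd a haS, hwS a haS]
        rcases hε with h | h <;> rw [h] <;> push_cast <;> ring
      have hsum : γ = ∑ b ∈ insert w (Δ \ S), (f b : ℝ) • b := by
        rw [Finset.sum_insert hwT]
        have h1 : γ - ((k*ε : ℤ):ℝ) • w = ∑ u ∈ Δ \ S, d (γ - ((k*ε : ℤ):ℝ) • w) u • u :=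
          hexpT _ hzero
        have h2 : ∀ u ∈ Δ \ S, d (γ - ((k*ε : ℤ):ℝ) • w) u • u = (f u : ℝ) • u := by
          intro u hu
          rw [(hdlin u).map_sub γ _, (hdlin u).map_smul _ w, smul_eq_mul, hfval u hu]
        rw [Finset.sum_congr rfl h2] at h1
        have hfw : (f w : ℝ) = ((k*ε : ℤ):ℝ) := by rw [hfdef]; simp
        rw [hfw]
        have := sub_eq_iff_eq_add.1 h1
        rw [this]
        abel
      refine ⟨f, hsum, ?_⟩
      rcases lt_trichotomy k 0 with hk | hk | hk
      · -- negative level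
        have hklev' : ∀ a ∈ S, d (-γ) a = ((-k : ℤ):ℝ) * d β a := by
          intro a haS
          rw [(hdlin a).map_neg γ, hkd a haS]
          push_cast
          ring
        have hb' := hbound (-γ) (rs_neg_mem hΦ hγΦ) (-k) (by omega) hklev'
        have hsigns : ∀ u ∈ Δ \ S, 0 ≤ -(ε:ℝ) * ((f u : ℝ)) := by
          intro u hu
          have huΔ : u ∈ Δ := Finset.sdiff_subset hu
          have huS : u ∉ S := (Finset.mem_sdiff.1 hu).2
          have := hb' u huΔ huS
          rw [(hdlin u).map_neg γ] at this
          rw [hfval u hu]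
          push_cast at this ⊢
          nlinarith
        rcases hε with hε1 | hε1
        · -- ε = 1 : all coefficients nonpositive
          refine Or.inr ?_
          intro b hb
          rw [Finset.mem_insert] at hb
          rcases hb with hb | hb
          · have hfb : f b = k * ε := by rw [hb, hfdef]; simp
            rw [hfb, hε1]
            omega
          · have := hsigns b hb
            rw [hε1] at this
            push_cast at this
            have : (0:ℝ) ≤ -(f b : ℝ) := by linarith
            have : (f b : ℝ) ≤ 0 := by linarith
            exact_mod_cast this
        · -- ε = -1 : all coefficients nonnegative
          refine Or.inl ?_
          intro b hb
          rw [Finset.mem_insert] at hb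
          rcases hb with hb | hb
          · have hfb : f b = k * ε := by rw [hb, hfdef]; simp
            rw [hfb, hε1]
            omega
          · have := hsigns b hb
            rw [hε1] at this
            push_cast at this
            have : (0:ℝ) ≤ (f b : ℝ) := by linarith
            exact_mod_cast this
      · -- level zero
        subst hk
        have hfw0 : f w = 0 := by rw [hfdef]; simp
        rcases hB.sign γ hγΦ with hsg | hsg
        · refine Or.inl ?_
          intro b hb
          rw [Finset.mem_insert] at hb
          rcases hb with hb | hb
          · subst hb; omega
          · have huΔ : b ∈ Δ := Finset.sdiff_subset hb
            have h1 := hfval b hb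
            push_cast at h1
            have h2 : (f b : ℝ) = d γ b := by rw [h1]; ring
            have h3 : 0 ≤ d γ b := by rw [hdb γ hγΦ b huΔ]; exact hsg b huΔ
            have : (0:ℝ) ≤ (f b : ℝ) := by rw [h2]; exact h3
            exact_mod_cast this
        · refine Or.inr ?_
          intro b hb
          rw [Finset.mem_insert] at hb
          rcases hb with hb | hb
          · subst hb; omega
          · have huΔ : b ∈ Δ := Finset.sdiff_subset hb
            have h1 := hfval b hb
            push_cast at h1
            have h2 : (f b : ℝ) = d γ b := by rw [h1]; ring
            have h3 : d γ b ≤ 0 := by rw [hdb γ hγΦ b huΔ]; exact hsg b huΔ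
            have : (f b : ℝ) ≤ 0 := by rw [h2]; exact h3
            exact_mod_cast this
      · -- positive level
        have hb' := hbound γ hγΦ k (by omega) hkd
        have hsigns : ∀ u ∈ Δ \ S, 0 ≤ (ε:ℝ) * ((f u : ℝ)) := by
          intro u hu
          have huΔ : u ∈ Δ := Finset.sdiff_subset hu
          have huS : u ∉ S := (Finset.mem_sdiff.1 hu).2
          have := hb' u huΔ huS
          rw [hfval u hu]
          push_cast at this ⊢
          nlinarith
        rcases hε with hε1 | hε1
        · refine Or.inl ?_
          intro b hb
          rw [Finset.mem_insert] at hb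
          rcases hb with hb | hb
          · have hfb : f b = k * ε := by rw [hb, hfdef]; simp
            rw [hfb, hε1]
            omega
          · have := hsigns b hb
            rw [hε1] at this
            push_cast at this
            have : (0:ℝ) ≤ (f b : ℝ) := by linarith
            exact_mod_cast this
        · refine Or.inr ?_
          intro b hb
          rw [Finset.mem_insert] at hb
          rcases hb with hb | hb
          · have hfb : f b = k * ε := by rw [hb, hfdef]; simp
            rw [hfb, hε1]
            omega
          · have := hsigns b hb
            rw [hε1] at this
            push_cast at this
            have : (f b : ℝ) ≤ 0 := by linarith
            exact_mod_cast this
  -- the two simple systems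
  have hsys1 : IsSimpleSystem (levZ Φ c S β) (insert m (Δ \ S)) := by
    apply mkSimple m 1 hmΦ (Or.inl rfl)
    · intro a haS
      rw [hmd a haS]
      push_cast
      ring
    · intro γ hγ k hk hklev u hu huS
      have := lemA hΦ hB hdlin hdb hdd hde hS hβ ha₀S ha₀pos ⟨hmΦ, hmc⟩ hm.2
        γ hγ k hk hklev u hu
      push_cast
      nlinarith
  have hsys2 : IsSimpleSystem (levZ Φ c S β) (insert (-M) (Δ \ S)) := by
    apply mkSimple (-M) (-1) (rs_neg_mem hΦ hMΦ) (Or.inr rfl)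
    · intro a haS
      rw [(hdlin a).map_neg M, hMd a haS]
      push_cast
      ring
    · intro γ hγ k hk hklev u hu huS
      have := lemB hΦ hB hdlin hdb hdd hde hS hβ ha₀S ha₀pos ⟨hMΦ, hMc⟩ hM.2
        γ hγ k hk hklev u hu
      have hnegM : d (-M) u = -(d M u) := (hdlin u).map_neg M
      push_cast
      rw [hnegM]
      nlinarith
  refine ⟨hsys1, hsys2, ?_⟩
  -- norms
  have hle1 : ‖m‖ ≤ ‖M‖ := by
    obtain ⟨x, hxΦ, hxlev, hxnorm, hxdom⟩ := rep_dom hΦ hB hdlin hdd hS m hmΦ hmd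
    have hxlev' : x ∈ lev Φ c S β := hmemlev x hxΦ hxlev
    have hxle := rootLe_coord hB hdlin hdb (hM.2 x hxlev')
    have hMx : M - x = ∑ a ∈ Δ, (d M a - d x a) • a := by
      have h1 := hde (M - x)
      rw [h1]
      apply Finset.sum_congr rfl
      intro a _
      rw [(hdlin a).map_sub M x]
    have hip : 0 ≤ ⟪x, M - x⟫ := by
      rw [hMx, inner_sum]
      apply Finset.sum_nonneg
      intro a haΔ
      rw [real_inner_smul_right]
      by_cases haS : a ∈ S
      · rw [hMd a haS, hxlev a haS]
        simp
      · exact mul_nonneg (by linarith [hxle a haΔ]) (hxdom a haΔ haS)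
    have hsq : ‖M‖^2 = ‖x‖^2 + 2*⟪x, M-x⟫ + ‖M-x‖^2 := by
      have h1 : x + (M - x) = M := by abel
      conv_lhs => rw [← h1]
      exact norm_add_sq_real x (M - x)
    have h2 : ‖x‖^2 ≤ ‖M‖^2 := by nlinarith [sq_nonneg ‖M-x‖]
    rw [← hxnorm]
    nlinarith [norm_nonneg x, norm_nonneg M]
  have hle2 : ‖M‖ ≤ ‖m‖ := by
    obtain ⟨y, hyΦ, hylev, hynorm, hyanti⟩ := rep_anti hΦ hB hdlin hdd hS M hMΦ hMd
    have hylev' : y ∈ lev Φ c S β := hmemlev y hyΦ hylev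
    have hyle := rootLe_coord hB hdlin hdb (hm.2 y hylev')
    have hym : y - m = ∑ a ∈ Δ, (d y a - d m a) • a := by
      have h1 := hde (y - m)
      rw [h1]
      apply Finset.sum_congr rfl
      intro a _
      rw [(hdlin a).map_sub y m]
    have hip : ⟪y, y - m⟫ ≤ 0 := by
      rw [hym, inner_sum]
      apply Finset.sum_nonpos
      intro a haΔ
      rw [real_inner_smul_right]
      by_cases haS : a ∈ S
      · rw [hmd a haS, hylev a haS]
        simp
      · exact mul_nonpos_of_nonneg_of_nonpos (by linarith [hyle a haΔ]) (hyanti a haΔ haS)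
    have hsq : ‖m‖^2 = ‖y‖^2 - 2*⟪y, y-m⟫ + ‖y-m‖^2 := by
      have h1 : y - (y - m) = m := by abel
      conv_lhs => rw [← h1]
      exact norm_sub_sq_real y (y - m)
    have h2 : ‖y‖^2 ≤ ‖m‖^2 := by nlinarith [sq_nonneg ‖y-m‖]
    rw [← hynorm]
    nlinarith [norm_nonneg y, norm_nonneg m]
  exact le_antisymm hle1 hle2
end

section
/- Let Φ be an irreducible crystallographic root system, S ⊆ Π, β ∈ Φ⁺ with supp(β) ∩ S ≠ ∅. If γ ∈ Φ_{S,β} is (Π\S)-dominant and γ ≠ max Φ_{S,β}, then max Φ_{S,β} is a long root and γ is a short root. Consequently, Φ_{S,β} contains at most one (Π\S)-dominant root of each length. -/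
open scoped RealInnerProductSpace
attribute [local instance] Classical.propDecidable

variable {E : Type*} [NormedAddCommGroup E] [InnerProductSpace ℝ E] [FiniteDimensional ℝ E]

set_option linter.unusedSectionVars false
set_option linter.unusedVariables false
set_option maxHeartbeats 1000000

section Aux

variable {E : Type*} [NormedAddCommGroup E] [InnerProductSpace ℝ E] [FiniteDimensional ℝ E]

lemma aux_coords_zero (Δ : Finset E) (hind : LinearIndependent ℝ (fun x : (Δ : Set E) => (x : E)))
    {g : E → ℝ} (hg : ∑ a ∈ Δ, g a • a = 0) : ∀ a ∈ Δ, g a = 0 := by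
  rw [Fintype.linearIndependent_iff] at hind
  intro a ha
  exact hind (fun x => g x) (by rw [← hg, ← Finset.sum_coe_sort Δ (fun a => g a • a)]; rfl)
    ⟨a, by simpa using ha⟩

lemma aux_coords_eq (Δ : Finset E) (hind : LinearIndependent ℝ (fun x : (Δ : Set E) => (x : E)))
    {g h : E → ℝ} (hgh : ∑ a ∈ Δ, g a • a = ∑ a ∈ Δ, h a • a) : ∀ a ∈ Δ, g a = h a := by
  intro a ha
  have h0 := aux_coords_zero Δ hind (g := fun x => g x - h x) ?_ a ha
  · linarith
  · simp only [sub_smul, Finset.sum_sub_distrib, hgh, sub_self]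

lemma aux_inner_self_pos {x : E} (hx : x ≠ 0) : (0:ℝ) < ⟪x, x⟫ := by
  rw [real_inner_self_eq_norm_sq]
  have := norm_pos_iff.mpr hx
  positivity

lemma aux_neg_mem {Φ : Finset E} (hΦ : IsRootSystem Φ) {δ : E} (hδ : δ ∈ Φ) : -δ ∈ Φ := by
  have h := hΦ.reflect δ hδ δ hδ
  have hd : ⟪δ, δ⟫ ≠ 0 := ne_of_gt (aux_inner_self_pos (hΦ.nonzero δ hδ))
  have h2 : 2 * ⟪δ, δ⟫ / ⟪δ, δ⟫ = (2:ℝ) := by field_simp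
  rw [h2] at h
  have h3 : δ - (2:ℝ) • δ = -δ := by rw [two_smul]; abel
  rwa [h3] at h

/-- Cauchy–Schwarz equality case for roots of a reduced system. -/
lemma aux_prop_eq {Φ : Finset E} (hΦ : IsRootSystem Φ) {α β : E} (hα : α ∈ Φ) (hβ : β ∈ Φ)
    (h : ⟪α, β⟫ * ⟪α, β⟫ = ⟪α, α⟫ * ⟪β, β⟫) : β = α ∨ β = -α := by
  have hα0 := hΦ.nonzero α hα
  have hβ0 := hΦ.nonzero β hβ
  have hn : (0:ℝ) < ‖α‖ * ‖β‖ := mul_pos (norm_pos_iff.mpr hα0) (norm_pos_iff.mpr hβ0)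
  have hsq : |⟪α, β⟫| ^ 2 = (‖α‖ * ‖β‖) ^ 2 := by
    rw [sq_abs, real_inner_self_eq_norm_sq, real_inner_self_eq_norm_sq] at *
    ring_nf; ring_nf at h; nlinarith [h]
  have habs : |⟪α, β⟫ / (‖α‖ * ‖β‖)| = 1 := by
    rw [abs_div, abs_of_pos hn, div_eq_one_iff_eq (ne_of_gt hn)]
    exact (sq_eq_sq₀ (abs_nonneg _) hn.le).mp hsq
  obtain ⟨-, r, hr, hrβ⟩ := (abs_real_inner_div_norm_mul_norm_eq_one_iff α β).mp habs
  rcases hΦ.reduced α hα r (by rwa [← hrβ]) with h1 | h1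
  · left; rw [hrβ, h1, one_smul]
  · right; rw [hrβ, h1, neg_smul, one_smul]

/-- The orbit of `α` under reflections in roots of `Φ`. -/
inductive Orb (Φ : Finset E) (α : E) : E → Prop
  | base : Orb Φ α α
  | step (δ : E) (hδ : δ ∈ Φ) (x : E) (hx : Orb Φ α x) :
      Orb Φ α (x - (2 * ⟪x, δ⟫ / ⟪δ, δ⟫) • δ)

lemma orb_mem {Φ : Finset E} (hΦ : IsRootSystem Φ) {α x : E} (hα : α ∈ Φ)
    (h : Orb Φ α x) : x ∈ Φ := by
  induction h with
  | base => exact hα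
  | step δ hδ y hy ih => exact hΦ.reflect δ hδ y ih

lemma orb_norm {Φ : Finset E} (hΦ : IsRootSystem Φ) {α x : E} (hα : α ∈ Φ)
    (h : Orb Φ α x) : ‖x‖ = ‖α‖ := by
  induction h with
  | base => rfl
  | step δ hδ y hy ih =>
    rw [← ih]
    have hδ0 : ⟪δ, δ⟫ ≠ 0 := ne_of_gt (aux_inner_self_pos (hΦ.nonzero δ hδ))
    set cc : ℝ := 2 * ⟪y, δ⟫ / ⟪δ, δ⟫ with hcc
    have hsq : ‖y - cc • δ‖ ^ 2 = ‖y‖ ^ 2 := by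
      rw [norm_sub_sq_real, real_inner_smul_right, norm_smul, mul_pow]
      have h1 : ‖cc‖ ^ 2 = cc ^ 2 := by rw [Real.norm_eq_abs, sq_abs]
      rw [h1, ← real_inner_self_eq_norm_sq δ]
      have h2 : cc ^ 2 * ⟪δ, δ⟫ = 2 * (cc * ⟪y, δ⟫) := by
        have h3 : cc * ⟪δ, δ⟫ = 2 * ⟪y, δ⟫ := by rw [hcc]; field_simp
        rw [sq, mul_assoc, h3]; ring
      linarith
    exact sq_eq_sq₀ (norm_nonneg _) (norm_nonneg _) |>.mp hsq

/-- In an irreducible system, every root is non-orthogonal to some root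
of the same length as any given root. -/
lemma aux_exists_nonorth {Φ : Finset E} (hΦ : IsRootSystem Φ) (hirr : IsIrredSys Φ)
    {α β : E} (hα : α ∈ Φ) (hβ : β ∈ Φ) :
    ∃ x ∈ Φ, ‖x‖ = ‖α‖ ∧ ⟪β, x⟫ ≠ 0 := by
  set O : Set E := {x | Orb Φ α x} with hO
  set V : Submodule ℝ E := Submodule.span ℝ O with hV
  have key : ∀ y ∈ Φ, (y : E) ∉ V → ∀ x ∈ O, ⟪y, x⟫ = 0 := by
    intro y hy hyV x hx
    by_contra hne
    have hyy : ⟪y, y⟫ ≠ 0 := ne_of_gt (aux_inner_self_pos (hΦ.nonzero y hy))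
    set cc : ℝ := 2 * ⟪x, y⟫ / ⟪y, y⟫ with hcc
    have hcc0 : cc ≠ 0 := by
      rw [hcc]
      have : ⟪x, y⟫ ≠ 0 := by rwa [real_inner_comm] at hne
      exact div_ne_zero (by simpa using this) hyy
    have hx' : (x - cc • y) ∈ O := Orb.step y hy x hx
    have hxV : x ∈ V := Submodule.subset_span hx
    have hx'V : (x - cc • y) ∈ V := Submodule.subset_span hx'
    have hcy : cc • y ∈ V := by
      have := V.sub_mem hxV hx'V
      simpa using this
    exact hyV ((V.smul_mem_iff hcc0).mp hcy)
  have orthV : ∀ y ∈ Φ, (y : E) ∉ V → ∀ v ∈ V, ⟪y, v⟫ = 0 := by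
    intro y hy hyV v hv
    induction hv using Submodule.span_induction with
    | mem z hz => exact key y hy hyV z hz
    | zero => simp
    | add a b _ _ ha hb => rw [inner_add_right, ha, hb, add_zero]
    | smul t a _ ha => rw [real_inner_smul_right, ha, mul_zero]
  have hsub : (Φ : Set E) ⊆ (V : Set E) := by
    have hI := hirr {y | y ∈ (Φ : Set E) ∧ y ∈ V} (fun y hy => hy.1) ?_
    · rcases hI with h | h
      · exfalso
        have hmem : α ∈ {y | y ∈ (Φ : Set E) ∧ y ∈ V} :=
          ⟨by simpa using hα, Submodule.subset_span (Orb.base)⟩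
        rw [h] at hmem
        exact hmem
      · intro y hy
        have hmem : y ∈ {y | y ∈ (Φ : Set E) ∧ y ∈ V} := by rw [h]; exact hy
        exact hmem.2
    · rintro x ⟨hxΦ, hxV⟩ y ⟨hyΦ, hyns⟩
      have hyV : y ∉ V := fun h => hyns ⟨hyΦ, h⟩
      rw [real_inner_comm]
      exact orthV y (by simpa using hyΦ) hyV x hxV
  have hβV : (β : E) ∈ V := hsub (by simpa using hβ)
  by_contra hcon
  push_neg at hcon
  have hall : ∀ x ∈ O, ⟪β, x⟫ = 0 := fun x hx =>
    hcon x (orb_mem hΦ hα hx) (orb_norm hΦ hα hx)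
  have hββ : ⟪β, β⟫ = 0 := by
    have hZ : ∀ v ∈ V, ⟪β, v⟫ = 0 := by
      intro v hv
      induction hv using Submodule.span_induction with
      | mem z hz => exact hall z hz
      | zero => simp
      | add a b _ _ ha hb => rw [inner_add_right, ha, hb, add_zero]
      | smul t a _ ha => rw [real_inner_smul_right, ha, mul_zero]
    exact hZ β hβV
  exact ne_of_gt (aux_inner_self_pos (hΦ.nonzero β hβ)) hββ

lemma aux_enum {a b : ℝ} (ha : 0 < a) (hb : 0 < b) {n m : ℤ} (hn : 0 < n) (hm : 0 < m)
    (hle : n * m ≤ 3) (hna : (n : ℝ) * a = (m : ℝ) * b) :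
    b = a ∨ b = 2 * a ∨ b = 3 * a ∨ 2 * b = a ∨ 3 * b = a := by
  have hn3 : n ≤ 3 := by nlinarith
  have hm3 : m ≤ 3 := by nlinarith
  interval_cases n <;> interval_cases m <;> push_cast at hna <;>
    first
      | omega
      | (left; linarith)
      | (right; left; linarith)
      | (right; right; left; linarith)
      | (right; right; right; left; linarith)
      | (right; right; right; right; linarith)

/-- Ratio of squared lengths of two roots in an irreducible crystallographic system. -/
lemma aux_len_ratio {Φ : Finset E} (hΦ : IsRootSystem Φ) (hirr : IsIrredSys Φ)
    {α β : E} (hα : α ∈ Φ) (hβ : β ∈ Φ) :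
    ‖β‖^2 = ‖α‖^2 ∨ ‖β‖^2 = 2*‖α‖^2 ∨ ‖β‖^2 = 3*‖α‖^2 ∨
      2*‖β‖^2 = ‖α‖^2 ∨ 3*‖β‖^2 = ‖α‖^2 := by
  obtain ⟨x, hxΦ, hxn, hxo⟩ := aux_exists_nonorth hΦ hirr hα hβ
  have ha : (0:ℝ) < ⟪x, x⟫ := aux_inner_self_pos (hΦ.nonzero x hxΦ)
  have hb : (0:ℝ) < ⟪β, β⟫ := aux_inner_self_pos (hΦ.nonzero β hβ)
  obtain ⟨n, hnd⟩ := hΦ.cry x hxΦ β hβ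
  obtain ⟨m, hmd⟩ := hΦ.cry β hβ x hxΦ
  have hc : ⟪x, β⟫ = ⟪β, x⟫ := real_inner_comm β x
  have hnv : 2 * ⟪β, x⟫ = (n : ℝ) * ⟪x, x⟫ := by
    field_simp at hnd; linarith
  have hmv : 2 * ⟪β, x⟫ = (m : ℝ) * ⟪β, β⟫ := by
    field_simp at hmd; linarith
  have ht : ⟪β, x⟫ ≠ 0 := hxo
  have hcs : ⟪β, x⟫ * ⟪β, x⟫ ≤ ⟪β, β⟫ * ⟪x, x⟫ := real_inner_mul_inner_self_le β x
  have hkey : ((n : ℝ) * (m : ℝ)) * (⟪x, x⟫ * ⟪β, β⟫) = 4 * (⟪β, x⟫ * ⟪β, x⟫) := by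
    rw [mul_mul_mul_comm, ← hnv, ← hmv]; ring
  have hab : (0:ℝ) < ⟪x, x⟫ * ⟪β, β⟫ := mul_pos ha hb
  have hnm4 : (n : ℝ) * (m : ℝ) ≤ 4 := by nlinarith [hkey, hcs, hab]
  have hnm0 : (0:ℝ) < (n : ℝ) * (m : ℝ) := by nlinarith [hkey, hab, mul_self_pos.mpr ht]
  have hxα : ⟪x, x⟫ = ‖α‖ ^ 2 := by rw [real_inner_self_eq_norm_sq, hxn]
  have hβn : ⟪β, β⟫ = ‖β‖ ^ 2 := real_inner_self_eq_norm_sq β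
  by_cases h4 : n * m = 4
  · -- equality in Cauchy–Schwarz
    have heq : ⟪x, β⟫ * ⟪x, β⟫ = ⟪x, x⟫ * ⟪β, β⟫ := by
      have h4' : (n : ℝ) * (m : ℝ) = 4 := by exact_mod_cast congrArg (Int.cast : ℤ → ℝ) h4
      have h5 : 4 * (⟪β, x⟫ * ⟪β, x⟫) = 4 * (⟪x, x⟫ * ⟪β, β⟫) := by rw [← hkey, h4']
      rw [hc]; linarith
    rcases aux_prop_eq hΦ hxΦ hβ heq with h | h
    · left; rw [h, hxn]
    · left; rw [h, norm_neg, hxn]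
  · have hnm0' : 0 < n * m := by exact_mod_cast hnm0
    have hnm4' : n * m ≤ 3 := by
      have : n * m ≤ 4 := by exact_mod_cast hnm4
      omega
    have hn0 : n ≠ 0 := fun h => by simp [h] at hnm0'
    have hm0 : m ≠ 0 := fun h => by simp [h] at hnm0'
    have hnmeq : (n : ℝ) * ⟪x, x⟫ = (m : ℝ) * ⟪β, β⟫ := by linarith
    rcases mul_pos_iff.mp hnm0' with ⟨hn1, hm1⟩ | ⟨hn1, hm1⟩
    · have := aux_enum ha hb hn1 hm1 hnm4' hnmeq
      rw [hxα, hβn] at this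
      tauto
    · have hn1' : 0 < -n := by omega
      have hm1' : 0 < -m := by omega
      have := aux_enum ha hb hn1' hm1' (by rw [neg_mul_neg]; exact hnm4')
        (by push_cast; linarith)
      rw [hxα, hβn] at this
      tauto

end Aux

section BaseLemmas

variable {E : Type*} [NormedAddCommGroup E] [InnerProductSpace ℝ E] [FiniteDimensional ℝ E]
variable {Φ Δ : Finset E} {c : E → E → ℝ}

lemma base_expand (hB : IsBase Φ Δ c) {ρ : E} (hρ : ρ ∈ Φ) (γ' : E) :
    ⟪γ', ρ⟫ = ∑ a ∈ Δ, c ρ a * ⟪γ', a⟫ := by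
  conv_lhs => rw [hB.repr ρ hρ]
  rw [inner_sum]
  exact Finset.sum_congr rfl fun a ha => real_inner_smul_right γ' a (c ρ a)

lemma base_sum_coords (hB : IsBase Φ Δ c) (P : Finset E) (hP : P ⊆ Φ) (f : E → ℝ) :
    ∑ ρ ∈ P, f ρ • ρ = ∑ a ∈ Δ, (∑ ρ ∈ P, f ρ * c ρ a) • a := by
  calc ∑ ρ ∈ P, f ρ • ρ = ∑ ρ ∈ P, ∑ a ∈ Δ, (f ρ * c ρ a) • a := by
        refine Finset.sum_congr rfl fun ρ hρ => ?_
        have hrep : f ρ • ρ = f ρ • ∑ a ∈ Δ, c ρ a • a := by rw [← hB.repr ρ (hP hρ)]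
        rw [hrep, Finset.smul_sum]
        exact Finset.sum_congr rfl fun a ha => smul_smul _ _ _
    _ = ∑ a ∈ Δ, ∑ ρ ∈ P, (f ρ * c ρ a) • a := Finset.sum_comm
    _ = ∑ a ∈ Δ, (∑ ρ ∈ P, f ρ * c ρ a) • a := by
        exact Finset.sum_congr rfl fun a ha => (Finset.sum_smul).symm

lemma base_decomp (hB : IsBase Φ Δ c) {S : Finset E} (hS : S ⊆ Δ)
    {β M γ : E} (hMl : M ∈ lev Φ c S β) (hγl : γ ∈ lev Φ c S β) (hle : rootLe Φ Δ c γ M) :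
    ∃ f : E → ℝ, (∀ ρ, 0 ≤ f ρ) ∧
      M - γ = ∑ ρ ∈ Φ.filter (fun ρ => ∀ a ∈ Δ, 0 ≤ c ρ a), f ρ • ρ ∧
      ∀ ρ ∈ Φ.filter (fun ρ => ∀ a ∈ Δ, 0 ≤ c ρ a), f ρ ≠ 0 → ∀ a ∈ S, c ρ a = 0 := by
  obtain ⟨f, hf0, heq⟩ := hle
  refine ⟨f, hf0, heq, ?_⟩
  set P := Φ.filter (fun ρ => ∀ a ∈ Δ, 0 ≤ c ρ a) with hPdef
  have hPΦ : P ⊆ Φ := Finset.filter_subset _ _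
  have h1 : ∑ ρ ∈ P, f ρ • ρ = ∑ a ∈ Δ, (∑ ρ ∈ P, f ρ * c ρ a) • a :=
    base_sum_coords hB P hPΦ f
  have h2 : M - γ = ∑ a ∈ Δ, (c M a - c γ a) • a := by
    have hM' := hB.repr M hMl.1
    have hγ' := hB.repr γ hγl.1
    calc M - γ = (∑ a ∈ Δ, c M a • a) - (∑ a ∈ Δ, c γ a • a) := by rw [← hM', ← hγ']
      _ = ∑ a ∈ Δ, (c M a - c γ a) • a := by
          rw [← Finset.sum_sub_distrib]
          exact Finset.sum_congr rfl fun a ha => (sub_smul _ _ _).symm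
  have hco : ∀ a ∈ Δ, (fun a => c M a - c γ a) a = (fun a => ∑ ρ ∈ P, f ρ * c ρ a) a :=
    aux_coords_eq Δ hB.indep (by rw [← h2, heq, h1])
  intro ρ hρ hfρ a haS
  have haΔ := hS haS
  have hz : ∑ ρ ∈ P, f ρ * c ρ a = 0 := by
    have := hco a haΔ
    simp only at this
    rw [← this, hMl.2 a haS, hγl.2 a haS, sub_self]
  have hterm : ∀ ρ' ∈ P, 0 ≤ f ρ' * c ρ' a := fun ρ' hρ' =>
    mul_nonneg (hf0 ρ') ((Finset.mem_filter.mp hρ').2 a haΔ)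
  have hz0 := (Finset.sum_eq_zero_iff_of_nonneg hterm).mp hz ρ hρ
  rcases mul_eq_zero.mp hz0 with h | h
  · exact absurd h hfρ
  · exact h

lemma base_dompair (hB : IsBase Φ Δ c) {S : Finset E} (hS : S ⊆ Δ)
    {β M γ γ' : E} (hMl : M ∈ lev Φ c S β) (hγl : γ ∈ lev Φ c S β) (hle : rootLe Φ Δ c γ M)
    (hdom : ∀ a ∈ Δ, a ∉ S → 0 ≤ ⟪γ', a⟫) : 0 ≤ ⟪γ', M - γ⟫ := by
  obtain ⟨f, hf0, heq, hzero⟩ := base_decomp hB hS hMl hγl hle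
  rw [heq, inner_sum]
  refine Finset.sum_nonneg fun ρ hρ => ?_
  rw [real_inner_smul_right]
  by_cases hf : f ρ = 0
  · rw [hf, zero_mul]
  · refine mul_nonneg (hf0 ρ) ?_
    rw [base_expand hB (Finset.mem_filter.mp hρ).1 γ']
    refine Finset.sum_nonneg fun a ha => ?_
    by_cases haS : a ∈ S
    · rw [hzero ρ hρ hf a haS, zero_mul]
    · exact mul_nonneg ((Finset.mem_filter.mp hρ).2 a ha) (hdom a ha haS)

/-- The core numeric lemma: a dominant element of the level different from the
maximum `M` pairs with `M` with Cartan integer 1, and is shorter by a factor 2 or 3. -/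
lemma base_core (hΦ : IsRootSystem Φ) (hB : IsBase Φ Δ c) {S : Finset E} (hS : S ⊆ Δ)
    {β M γ : E} (hMl : M ∈ lev Φ c S β) (hγl : γ ∈ lev Φ c S β) (hle : rootLe Φ Δ c γ M)
    (hdom : ∀ a ∈ Δ, a ∉ S → 0 ≤ ⟪γ, a⟫) (hne : γ ≠ M) :
    2 * ⟪γ, M⟫ = ⟪M, M⟫ ∧ (⟪M, M⟫ = 2 * ⟪γ, γ⟫ ∨ ⟪M, M⟫ = 3 * ⟪γ, γ⟫) := by
  have hγΦ := hγl.1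
  have hMΦ := hMl.1
  have hg : (0:ℝ) < ⟪γ, γ⟫ := aux_inner_self_pos (hΦ.nonzero γ hγΦ)
  have hb : (0:ℝ) < ⟪M, M⟫ := aux_inner_self_pos (hΦ.nonzero M hMΦ)
  have h1 : 0 ≤ ⟪γ, M - γ⟫ := base_dompair hB hS hMl hγl hle hdom
  rw [inner_sub_right] at h1
  have ht : ⟪γ, γ⟫ ≤ ⟪γ, M⟫ := by linarith
  obtain ⟨n, hnd⟩ := hΦ.cry γ hγΦ M hMΦ
  obtain ⟨m, hmd⟩ := hΦ.cry M hMΦ γ hγΦ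
  have hcm : ⟪M, γ⟫ = ⟪γ, M⟫ := real_inner_comm γ M
  rw [hcm] at hnd
  rw [real_inner_comm M γ, hcm] at hmd
  have hnv : 2 * ⟪γ, M⟫ = (n:ℝ) * ⟪γ, γ⟫ := by field_simp at hnd; linarith
  have hmv : 2 * ⟪γ, M⟫ = (m:ℝ) * ⟪M, M⟫ := by field_simp at hmd; linarith
  have hn2 : (2:ℤ) ≤ n := by
    have : (2:ℝ) ≤ (n:ℝ) := by nlinarith
    exact_mod_cast this
  have hm1 : (1:ℤ) ≤ m := by
    have : (0:ℝ) < (m:ℝ) := by nlinarith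
    have : (0:ℤ) < m := by exact_mod_cast this
    omega
  have hcs : ⟪γ, M⟫ * ⟪γ, M⟫ ≤ ⟪γ, γ⟫ * ⟪M, M⟫ := real_inner_mul_inner_self_le γ M
  have hkey : ((n:ℝ) * (m:ℝ)) * (⟪γ, γ⟫ * ⟪M, M⟫) = 4 * (⟪γ, M⟫ * ⟪γ, M⟫) := by
    rw [mul_mul_mul_comm, ← hnv, ← hmv]; ring
  have hnm4 : n * m ≤ 4 := by
    have : (n:ℝ) * (m:ℝ) ≤ 4 := by nlinarith [mul_pos hg hb]
    exact_mod_cast this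
  have hne4 : n * m ≠ 4 := by
    intro h4
    have h4' : (n:ℝ) * (m:ℝ) = 4 := by exact_mod_cast congrArg (Int.cast : ℤ → ℝ) h4
    rw [h4'] at hkey
    have heqq : ⟪γ, M⟫ * ⟪γ, M⟫ = ⟪γ, γ⟫ * ⟪M, M⟫ := by linarith
    rcases aux_prop_eq hΦ hγΦ hMΦ heqq with h | h
    · exact hne h.symm
    · rw [h, inner_neg_right] at ht
      linarith
  have hnm3 : n * m ≤ 3 := by omega
  have hmeq : m = 1 := by
    have : m < 2 := by nlinarith
    omega
  have h2t : 2 * ⟪γ, M⟫ = ⟪M, M⟫ := by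
    rw [hmv, hmeq]; push_cast; ring
  refine ⟨h2t, ?_⟩
  have hn3 : n ≤ 3 := by nlinarith
  have hbng : ⟪M, M⟫ = (n:ℝ) * ⟪γ, γ⟫ := by linarith
  interval_cases n
  · left; rw [hbng]; norm_num
  · right; rw [hbng]; norm_num

end BaseLemmas

section BaseLemmas2

variable {E : Type*} [NormedAddCommGroup E] [InnerProductSpace ℝ E] [FiniteDimensional ℝ E]
variable {Φ Δ : Finset E} {c : E → E → ℝ}

lemma base_sum_sub (Δ : Finset E) (g h : E → ℝ) :
    ∑ a ∈ Δ, (g a - h a) • a = (∑ a ∈ Δ, g a • a) - ∑ a ∈ Δ, h a • a := by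
  rw [← Finset.sum_sub_distrib]
  exact Finset.sum_congr rfl fun a _ => sub_smul _ _ _

lemma base_sum_add (Δ : Finset E) (g h : E → ℝ) :
    ∑ a ∈ Δ, (g a + h a) • a = (∑ a ∈ Δ, g a • a) + ∑ a ∈ Δ, h a • a := by
  rw [← Finset.sum_add_distrib]
  exact Finset.sum_congr rfl fun a _ => add_smul _ _ _

lemma base_sub_coords (hB : IsBase Φ Δ c) {x y d : E} (hx : x ∈ Φ) (hy : y ∈ Φ)
    (hd : d ∈ Φ) (hvec : d = x - y) : ∀ a ∈ Δ, c d a = c x a - c y a := by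
  have := aux_coords_eq Δ hB.indep (g := fun a => c d a)
    (h := fun a => c x a - c y a) ?_
  · exact this
  · rw [base_sum_sub Δ (fun a => c x a) (fun a => c y a),
      ← hB.repr d hd, ← hB.repr x hx, ← hB.repr y hy]
    exact hvec

lemma base_add_coords (hB : IsBase Φ Δ c) {x y d : E} (hx : x ∈ Φ) (hy : y ∈ Φ)
    (hd : d ∈ Φ) (hvec : d = x + y) : ∀ a ∈ Δ, c d a = c x a + c y a := by
  have := aux_coords_eq Δ hB.indep (g := fun a => c d a)
    (h := fun a => c x a + c y a) ?_
  · exact this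
  · rw [base_sum_add Δ (fun a => c x a) (fun a => c y a),
      ← hB.repr d hd, ← hB.repr x hx, ← hB.repr y hy]
    exact hvec

end BaseLemmas2

/-- If `γ ∈ Φ_{S,β}` is `(Π \ S)`-dominant and different from `max Φ_{S,β}`, then the
maximum is a long root and `γ` is a short root; consequently `Φ_{S,β}` contains at most
one `(Π \ S)`-dominant root of each length. -/
theorem stmt9 (Φ Δ : Finset E) (c : E → E → ℝ)
    (hΦ : IsRootSystem Φ) (hB : IsBase Φ Δ c) (hirr : IsIrredSys Φ)
    (S : Finset E) (hS : S ⊆ Δ) (β : E) (hβ : β ∈ Φ)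
    (hβpos : ∀ a ∈ Δ, 0 ≤ c β a) (hsupp : ∃ a ∈ S, c β a ≠ 0)
    (M : E) (hM : M ∈ lev Φ c S β ∧ ∀ γ ∈ lev Φ c S β, rootLe Φ Δ c γ M) :
    (∀ γ ∈ lev Φ c S β, (∀ a ∈ Δ, a ∉ S → 0 ≤ ⟪γ, a⟫) → γ ≠ M →
      (∀ δ ∈ Φ, ‖δ‖ ≤ ‖M‖) ∧ (∀ δ ∈ Φ, ‖γ‖ ≤ ‖δ‖)) ∧
    (∀ γ₁ ∈ lev Φ c S β, ∀ γ₂ ∈ lev Φ c S β,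
      (∀ a ∈ Δ, a ∉ S → 0 ≤ ⟪γ₁, a⟫) → (∀ a ∈ Δ, a ∉ S → 0 ≤ ⟪γ₂, a⟫) →
      ‖γ₁‖ = ‖γ₂‖ → γ₁ = γ₂) := by
  obtain ⟨hMl, hMmax⟩ := hM
  have hMΦ : M ∈ Φ := hMl.1
  constructor
  · -- Part 1: `M` is long and `γ` is short
    intro γ hγl hdom hne
    have hγΦ : γ ∈ Φ := hγl.1
    obtain ⟨h2t, hn⟩ := base_core hΦ hB hS hMl hγl (hMmax γ hγl) hdom hne
    rw [real_inner_self_eq_norm_sq M, real_inner_self_eq_norm_sq γ] at hn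
    have hγpos : (0:ℝ) < ‖γ‖ ^ 2 := by
      have := norm_pos_iff.mpr (hΦ.nonzero γ hγΦ)
      positivity
    constructor
    · intro δ hδ
      have r1 := aux_len_ratio hΦ hirr hMΦ hδ
      have r2 := aux_len_ratio hΦ hirr hγΦ hδ
      refine le_of_pow_le_pow_left₀ two_ne_zero (norm_nonneg M) ?_
      rcases hn with h | h <;> rcases r1 with r | r | r | r | r <;>
        rcases r2 with q | q | q | q | q <;> linarith
    · intro δ hδ
      have r1 := aux_len_ratio hΦ hirr hMΦ hδ
      have r2 := aux_len_ratio hΦ hirr hγΦ hδ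
      refine le_of_pow_le_pow_left₀ two_ne_zero (norm_nonneg δ) ?_
      rcases hn with h | h <;> rcases r1 with r | r | r | r | r <;>
        rcases r2 with q | q | q | q | q <;> linarith
  · -- Part 2: uniqueness of dominant roots of a given length
    intro γ₁ hγ₁l γ₂ hγ₂l hdom1 hdom2 hnorm
    by_contra hne12
    have hγ1Φ : γ₁ ∈ Φ := hγ₁l.1
    have hγ2Φ : γ₂ ∈ Φ := hγ₂l.1
    obtain ⟨a₀, ha₀S, ha₀⟩ := hsupp
    have ha₀Δ : a₀ ∈ Δ := hS ha₀S
    have hs1 : ⟪γ₁, γ₁⟫ = ⟪γ₂, γ₂⟫ := by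
      rw [real_inner_self_eq_norm_sq, real_inner_self_eq_norm_sq, hnorm]
    have hs : (0:ℝ) < ⟪γ₂, γ₂⟫ := aux_inner_self_pos (hΦ.nonzero γ₂ hγ2Φ)
    have hb : (0:ℝ) < ⟪M, M⟫ := aux_inner_self_pos (hΦ.nonzero M hMΦ)
    by_cases h1M : γ₁ = M
    · by_cases h2M : γ₂ = M
      · exact hne12 (h1M.trans h2M.symm)
      · obtain ⟨h2t2, hn2⟩ := base_core hΦ hB hS hMl hγ₂l (hMmax γ₂ hγ₂l) hdom2 h2M
        rw [← h1M, hs1] at hn2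
        rcases hn2 with h | h <;> linarith
    by_cases h2M : γ₂ = M
    · obtain ⟨h2t1, hn1⟩ := base_core hΦ hB hS hMl hγ₁l (hMmax γ₁ hγ₁l) hdom1 h1M
      rw [← h2M, ← hs1] at hn1
      have hs' : (0:ℝ) < ⟪γ₁, γ₁⟫ := by rw [hs1]; exact hs
      rcases hn1 with h | h <;> linarith
    -- now both γ₁ and γ₂ are different from M, hence short
    obtain ⟨h2t1, hn1⟩ := base_core hΦ hB hS hMl hγ₁l (hMmax γ₁ hγ₁l) hdom1 h1M
    obtain ⟨h2t2, hn2⟩ := base_core hΦ hB hS hMl hγ₂l (hMmax γ₂ hγ₂l) hdom2 h2M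
    rw [hs1] at hn1
    -- u = M - γ₁ is a root
    have hrefl := hΦ.reflect M hMΦ γ₁ hγ1Φ
    have hcoef : 2 * ⟪γ₁, M⟫ / ⟪M, M⟫ = (1:ℝ) := by
      rw [h2t1, div_self (ne_of_gt hb)]
    rw [hcoef, one_smul] at hrefl
    have huΦ : M - γ₁ ∈ Φ := by
      have := aux_neg_mem hΦ hrefl
      rwa [neg_sub] at this
    -- Cartan integer of the pair (γ₁, γ₂)
    obtain ⟨k, hkd⟩ := hΦ.cry γ₂ hγ2Φ γ₁ hγ1Φ
    have hkv : 2 * ⟪γ₁, γ₂⟫ = (k:ℝ) * ⟪γ₂, γ₂⟫ := by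
      field_simp at hkd; linarith
    -- u has the same length as γ₂
    have huu : ⟪M - γ₁, M - γ₁⟫ = ⟪γ₂, γ₂⟫ := by
      rw [real_inner_sub_sub_self]
      have hc : ⟪M, γ₁⟫ = ⟪γ₁, M⟫ := real_inner_comm γ₁ M
      rw [← hs1]; linarith
    -- inner product of γ₂ with u
    have hγ2u : 2 * ⟪γ₂, M - γ₁⟫ = ⟪M, M⟫ - (k:ℝ) * ⟪γ₂, γ₂⟫ := by
      rw [inner_sub_right]
      have hc21 : ⟪γ₂, γ₁⟫ = ⟪γ₁, γ₂⟫ := real_inner_comm γ₁ γ₂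
      linarith
    -- u cannot be ±γ₂ (looking at the coordinates on S)
    have hu2 : M - γ₁ ≠ γ₂ := by
      intro h
      have hvec : M = γ₁ + γ₂ := by rw [← h]; abel
      have hco := base_add_coords hB hγ1Φ hγ2Φ hMΦ hvec a₀ ha₀Δ
      rw [hMl.2 a₀ ha₀S, hγ₁l.2 a₀ ha₀S, hγ₂l.2 a₀ ha₀S] at hco
      exact ha₀ (by linarith)
    have hu2' : M - γ₁ ≠ -γ₂ := by
      intro h
      have hvec : M = γ₁ - γ₂ := by
        rw [sub_eq_iff_eq_add] at h
        rw [h]; abel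
      have hco := base_sub_coords hB hγ1Φ hγ2Φ hMΦ hvec a₀ ha₀Δ
      rw [hMl.2 a₀ ha₀S, hγ₁l.2 a₀ ha₀S, hγ₂l.2 a₀ ha₀S] at hco
      exact ha₀ (by linarith)
    -- γ₂ cannot be ±γ₁
    have hne21 : γ₂ ≠ -γ₁ := by
      intro h
      have hzero : ∑ a ∈ Δ, (c γ₁ a + c γ₂ a) • a = 0 := by
        rw [base_sum_add Δ (fun a => c γ₁ a) (fun a => c γ₂ a),
          ← hB.repr γ₁ hγ1Φ, ← hB.repr γ₂ hγ2Φ, h]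
        abel
      have hco := aux_coords_zero Δ hB.indep hzero a₀ ha₀Δ
      rw [hγ₁l.2 a₀ ha₀S, hγ₂l.2 a₀ ha₀S] at hco
      exact ha₀ (by linarith)
    -- strict Cauchy–Schwarz for (γ₁, γ₂)
    have hcs12 : ⟪γ₁, γ₂⟫ * ⟪γ₁, γ₂⟫ ≤ ⟪γ₁, γ₁⟫ * ⟪γ₂, γ₂⟫ :=
      real_inner_mul_inner_self_le γ₁ γ₂
    have hstrict12 : ⟪γ₁, γ₂⟫ * ⟪γ₁, γ₂⟫ ≠ ⟪γ₁, γ₁⟫ * ⟪γ₂, γ₂⟫ := by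
      intro heq
      rcases aux_prop_eq hΦ hγ1Φ hγ2Φ heq with h | h
      · exact hne12 h.symm
      · exact hne21 h
    -- strict Cauchy–Schwarz for (γ₂, u)
    have hcsu : ⟪γ₂, M - γ₁⟫ * ⟪γ₂, M - γ₁⟫ ≤ ⟪γ₂, γ₂⟫ * ⟪M - γ₁, M - γ₁⟫ :=
      real_inner_mul_inner_self_le γ₂ (M - γ₁)
    have hstrictu : ⟪γ₂, M - γ₁⟫ * ⟪γ₂, M - γ₁⟫ ≠ ⟪γ₂, γ₂⟫ * ⟪M - γ₁, M - γ₁⟫ := by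
      intro heq
      rcases aux_prop_eq hΦ hγ2Φ huΦ heq with h | h
      · exact hu2 h
      · exact hu2' h
    -- bound on k
    have hk1 : (k:ℝ) ≤ 1 := by
      have hklt : (k:ℝ)^2 < 4 := by
        have hlt : ⟪γ₁, γ₂⟫ * ⟪γ₁, γ₂⟫ < ⟪γ₂, γ₂⟫ * ⟪γ₂, γ₂⟫ := by
          rw [hs1] at hcs12 hstrict12
          exact lt_of_le_of_ne hcs12 hstrict12
        have h4 : ((k:ℝ) * ⟪γ₂, γ₂⟫)^2 = 4 * (⟪γ₁, γ₂⟫ * ⟪γ₁, γ₂⟫) := by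
          rw [← hkv]; ring
        nlinarith [h4, hlt, mul_pos hs hs]
      have hk2 : k^2 < 4 := by exact_mod_cast hklt
      have : k ≤ 1 := by nlinarith
      exact_mod_cast this
    -- the Cartan integer of the pair (u, γ₂)
    obtain ⟨k', hk'd⟩ := hΦ.cry (M - γ₁) huΦ γ₂ hγ2Φ
    rw [huu] at hk'd
    have hk'v : 2 * ⟪γ₂, M - γ₁⟫ = (k':ℝ) * ⟪γ₂, γ₂⟫ := by
      field_simp at hk'd; linarith
    have hk'1 : (k':ℝ) ≤ 1 := by
      have hklt : (k':ℝ)^2 < 4 := by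
        have hlt : ⟪γ₂, M - γ₁⟫ * ⟪γ₂, M - γ₁⟫ < ⟪γ₂, γ₂⟫ * ⟪γ₂, γ₂⟫ := by
          rw [huu] at hcsu hstrictu
          exact lt_of_le_of_ne hcsu hstrictu
        have h4 : ((k':ℝ) * ⟪γ₂, γ₂⟫)^2 = 4 * (⟪γ₂, M - γ₁⟫ * ⟪γ₂, M - γ₁⟫) := by
          rw [← hk'v]; ring
        nlinarith [h4, hlt, mul_pos hs hs]
      have hk2 : k'^2 < 4 := by exact_mod_cast hklt
      have : k' ≤ 1 := by nlinarith
      exact_mod_cast this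
    -- case on the length of M
    rcases hn1 with hMM | hMM
    swap
    · -- ⟪M, M⟫ = 3⟪γ₂, γ₂⟫ : impossible
      have : (k':ℝ) * ⟪γ₂, γ₂⟫ = (3 - (k:ℝ)) * ⟪γ₂, γ₂⟫ := by
        rw [← hk'v, hγ2u, hMM]; ring
      have hk'eq : (k':ℝ) = 3 - (k:ℝ) := mul_right_cancel₀ (ne_of_gt hs) this
      linarith
    -- ⟪M, M⟫ = 2⟪γ₂, γ₂⟫, so k = 1 and γ₁ - γ₂ is a root
    have hkeq : (k:ℝ) = 1 := by
      have : (k':ℝ) * ⟪γ₂, γ₂⟫ = (2 - (k:ℝ)) * ⟪γ₂, γ₂⟫ := by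
        rw [← hk'v, hγ2u, hMM]; ring
      have hk'eq : (k':ℝ) = 2 - (k:ℝ) := mul_right_cancel₀ (ne_of_gt hs) this
      linarith
    have hip : 2 * ⟪γ₁, γ₂⟫ = ⟪γ₂, γ₂⟫ := by rw [hkv, hkeq]; ring
    have hrefl2 := hΦ.reflect γ₂ hγ2Φ γ₁ hγ1Φ
    have hcoef2 : 2 * ⟪γ₁, γ₂⟫ / ⟪γ₂, γ₂⟫ = (1:ℝ) := by
      rw [hip, div_self (ne_of_gt hs)]
    rw [hcoef2, one_smul] at hrefl2
    -- hrefl2 : γ₁ - γ₂ ∈ Φ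
    have hdco := base_sub_coords hB hγ1Φ hγ2Φ hrefl2 rfl
    have hc21 : ⟪γ₂, γ₁⟫ = ⟪γ₁, γ₂⟫ := real_inner_comm γ₁ γ₂
    rcases hB.sign (γ₁ - γ₂) hrefl2 with hpos | hneg
    · -- γ₁ - γ₂ is a positive root supported outside S, so ⟪γ₂, γ₁ - γ₂⟫ ≥ 0
      have hge : 0 ≤ ⟪γ₂, γ₁ - γ₂⟫ := by
        rw [base_expand hB hrefl2 γ₂]
        refine Finset.sum_nonneg fun a ha => ?_
        by_cases haS : a ∈ S
        · rw [hdco a ha, hγ₁l.2 a haS, hγ₂l.2 a haS, sub_self, zero_mul]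
        · exact mul_nonneg (hpos a ha) (hdom2 a ha haS)
      rw [inner_sub_right] at hge
      linarith
    · -- γ₂ - γ₁ is a positive root supported outside S, so ⟪γ₁, γ₂ - γ₁⟫ ≥ 0
      have hmdΦ : γ₂ - γ₁ ∈ Φ := by
        have := aux_neg_mem hΦ hrefl2
        rwa [neg_sub] at this
      have hdco' := base_sub_coords hB hγ2Φ hγ1Φ hmdΦ rfl
      have hge : 0 ≤ ⟪γ₁, γ₂ - γ₁⟫ := by
        rw [base_expand hB hmdΦ γ₁]
        refine Finset.sum_nonneg fun a ha => ?_
        by_cases haS : a ∈ S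
        · rw [hdco' a ha, hγ₁l.2 a haS, hγ₂l.2 a haS, sub_self, zero_mul]
        · refine mul_nonneg ?_ (hdom1 a ha haS)
          rw [hdco' a ha]
          have := hneg a ha
          rw [hdco a ha] at this
          linarith
      rw [inner_sub_right] at hge
      have hc12 : ⟪γ₁, γ₂⟫ = ⟪γ₂, γ₂⟫ / 2 := by linarith
      rw [hs1] at hge
      linarith
end
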